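/- arXiv:2509.25809 — 4 statements merged into one kernel-verified Lean document; each statement's English description precedes it below -/
import Mathlib

section
/- Let G be a graph that is both 5-connected and a contraction critical quasi 5-connected graph (i.e., no edge of G is quasi 5-contractible). Let A be a nontrivial fragment of G (so A is the union of vertex sets of some but not all components of G − T for some 4-cut or smallest cut T = N_G(A), with |A| ≥ 2 and |V(G) − A − N_G(A)| ≥ 2). If there exists a vertex x ∈ N_G(A) with |N_G(x) ∩ A| = 1, then |A| = 2. -/
open SimpleGraph Set

variable {V : Type*}

/-- `G` is `k`-connected: more than `k` vertices and removing fewer than `k`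
vertices leaves a connected graph. -/
def IsKConnected (k : ℕ) [Fintype V] (G : SimpleGraph V) : Prop :=
  k + 1 ≤ Fintype.card V ∧
    ∀ S : Set V, S.ncard < k → (G.induce Sᶜ).Connected

/-- Contraction of the edge `xy`: identify `y` with `x`, simplifying multiple edges. -/
def contractE [DecidableEq V] (G : SimpleGraph V) (x y : V) :
    SimpleGraph {v : V // v ≠ y} :=
  SimpleGraph.fromRel (fun a b =>
    G.Adj a.1 b.1 ∨ (a.1 = x ∧ G.Adj y b.1) ∨ (b.1 = x ∧ G.Adj y a.1))

/-- The (outer) neighborhood of a vertex set `A`. -/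
def gBoundary (G : SimpleGraph V) (A : Set V) : Set V :=
  {v | v ∉ A ∧ ∃ a ∈ A, G.Adj v a}

/-- `S` separates `G`: the rest of the graph splits into two nonempty parts
with no edges between them. -/
def Separates (G : SimpleGraph V) (S : Set V) : Prop :=
  ∃ A B : Set V, A.Nonempty ∧ B.Nonempty ∧ Disjoint A B ∧ A ∪ B = Sᶜ ∧
    ∀ a ∈ A, ∀ b ∈ B, ¬ G.Adj a b

/-- `T` is a nontrivial 4-cut: `|T| = 4` and `G - T` splits into two parts,
each of size at least 2, with no edges between them. -/
def IsNontrivialFourCut (G : SimpleGraph V) (T : Set V) : Prop :=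
  T.ncard = 4 ∧ ∃ A B : Set V, 2 ≤ A.ncard ∧ 2 ≤ B.ncard ∧ Disjoint A B ∧
    A ∪ B = Tᶜ ∧ ∀ a ∈ A, ∀ b ∈ B, ¬ G.Adj a b

/-- `G` is quasi 5-connected: 4-connected without a nontrivial 4-cut. -/
def QuasiFiveConnected [Fintype V] (G : SimpleGraph V) : Prop :=
  IsKConnected 4 G ∧ ∀ T : Set V, ¬ IsNontrivialFourCut G T

/-- `G` is contraction critical quasi 5-connected. -/
def ContractionCriticalQuasiFive [Fintype V] [DecidableEq V] (G : SimpleGraph V) : Prop :=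
  QuasiFiveConnected G ∧
    ∀ x y : V, G.Adj x y → ¬ QuasiFiveConnected (contractE G x y)

/-- `A` is a fragment of `G`: both `A` and its "far side" are nonempty and the
neighborhood of `A` is a smallest separating set. -/
def IsFragment (G : SimpleGraph V) (A : Set V) : Prop :=
  A.Nonempty ∧ (Aᶜ \ gBoundary G A).Nonempty ∧
    ∀ S : Set V, Separates G S → (gBoundary G A).ncard ≤ S.ncard

/-- A nontrivial fragment: both sides have at least two vertices. -/
def IsNontrivialFragment (G : SimpleGraph V) (A : Set V) : Prop :=
  IsFragment G A ∧ 2 ≤ A.ncard ∧ 2 ≤ (Aᶜ \ gBoundary G A).ncard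

/-- Degree sum at least 9 for every pair of vertices at distance one or two. -/
def DegSumNine (G : SimpleGraph V) : Prop :=
  ∀ u v : V, (G.dist u v = 1 ∨ G.dist u v = 2) →
    9 ≤ (G.neighborSet u).ncard + (G.neighborSet v).ncard

section Aux

lemma sep_ge [Fintype V] {G : SimpleGraph V} (h5 : IsKConnected 5 G)
    {S : Set V} (hS : Separates G S) : 5 ≤ S.ncard := by
  by_contra h
  push_neg at h
  have hconn := h5.2 S h
  obtain ⟨P, Q, hP, hQ, hdisj, hunion, hedge⟩ := hS
  obtain ⟨p, hp⟩ := hP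
  obtain ⟨q, hq⟩ := hQ
  have hpS : p ∈ Sᶜ := hunion ▸ Or.inl hp
  have hqS : q ∈ Sᶜ := hunion ▸ Or.inr hq
  have key : ∀ (u w : ↥(Sᶜ)), (G.induce Sᶜ).Walk u w → u.1 ∈ P → w.1 ∈ P := by
    intro u w hw
    induction hw with
    | nil => exact id
    | @cons u v w h pth ih =>
      intro hu
      apply ih
      have hv : v.1 ∈ P ∪ Q := by
        rw [hunion]; exact v.2
      rcases hv with hv | hv
      · exact hv
      · exact absurd (h : G.Adj u.1 v.1) (hedge u.1 hu v.1 hv)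
  have := (hconn.preconnected ⟨p, hpS⟩ ⟨q, hqS⟩).elim
    (fun w => key _ _ w hp)
  exact Set.disjoint_left.mp hdisj this hq

lemma boundary_separates {G : SimpleGraph V} {X : Set V} (hX : X.Nonempty)
    (hfar : (Xᶜ \ gBoundary G X).Nonempty) : Separates G (gBoundary G X) := by
  refine ⟨X, Xᶜ \ gBoundary G X, hX, hfar, ?_, ?_, ?_⟩
  · exact Set.disjoint_left.mpr (fun v hv h2 => h2.1 hv)
  · ext v
    constructor
    · rintro (hv | hv)
      · exact fun h => h.1 hv
      · exact fun h => (hv.2) h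
    · intro hv
      by_cases hvX : v ∈ X
      · exact Or.inl hvX
      · exact Or.inr ⟨hvX, hv⟩
  · intro v hv w hw hadj
    exact hw.2 ⟨hw.1, v, hv, hadj.symm⟩

lemma frag_ineq [Fintype V] {G : SimpleGraph V} (h5 : IsKConnected 5 G)
    {X U : Set V} (hX : X.Nonempty) {v₀ : V} (hv₀ : v₀ ∉ X)
    (hb : v₀ ∉ gBoundary G X) (hsub : gBoundary G X ⊆ U) : 5 ≤ U.ncard :=
  le_trans (sep_ge h5 (boundary_separates hX ⟨v₀, hv₀, hb⟩))
    (Set.ncard_le_ncard hsub (Set.toFinite U))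

lemma ncard_split3 [Fintype V] {P Q R X : Set V} (hcover : P ∪ Q ∪ R = univ)
    (hPQ : Disjoint P Q) (hPR : Disjoint P R) (hQR : Disjoint Q R) :
    X.ncard = (P ∩ X).ncard + (Q ∩ X).ncard + (R ∩ X).ncard := by
  have hX : X = (P ∩ X) ∪ (Q ∩ X) ∪ (R ∩ X) := by
    rw [← Set.union_inter_distrib_right, ← Set.union_inter_distrib_right, hcover,
      Set.univ_inter]
  have : X.ncard = ((P ∩ X) ∪ (Q ∩ X) ∪ (R ∩ X)).ncard := by rw [← hX]
  rw [this, Set.ncard_union_eq, Set.ncard_union_eq] <;>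
    first
      | exact Set.toFinite _
      | exact (hPQ.mono Set.inter_subset_left Set.inter_subset_left)
      | exact ((Set.disjoint_union_left).mpr
          ⟨hPR.mono Set.inter_subset_left Set.inter_subset_left,
           hQR.mono Set.inter_subset_left Set.inter_subset_left⟩)

lemma contract_adj_of_adj [DecidableEq V] {G : SimpleGraph V} {x a : V}
    {v w : {u : V // u ≠ a}} (h : G.Adj v.1 w.1) : (contractE G x a).Adj v w := by
  rw [contractE, SimpleGraph.fromRel_adj]
  exact ⟨fun he => G.ne_of_adj h (congrArg Subtype.val he), Or.inl (Or.inl h)⟩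

lemma contract_adj_x [DecidableEq V] {G : SimpleGraph V} {x a : V} (hxa : x ≠ a)
    {w : {u : V // u ≠ a}} (h : G.Adj a w.1) (hxw : x ≠ w.1) :
    (contractE G x a).Adj ⟨x, hxa⟩ w := by
  rw [contractE, SimpleGraph.fromRel_adj]
  exact ⟨fun he => hxw (congrArg Subtype.val he), Or.inl (Or.inr (Or.inl ⟨rfl, h⟩))⟩

lemma card_subtype_ne [Fintype V] [DecidableEq V] (a : V) :
    Fintype.card {v : V // v ≠ a} = Fintype.card V - 1 := by
  have := Fintype.card_subtype_compl (fun v : V => v = a)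
  simp only [Fintype.card_subtype_eq] at this
  exact this

lemma contract_fourconn [Fintype V] [DecidableEq V] {G : SimpleGraph V}
    (h5 : IsKConnected 5 G) {x a : V} (hadj : G.Adj x a) :
    IsKConnected 4 (contractE G x a) := by
  have hcard : 6 ≤ Fintype.card V := h5.1
  constructor
  · rw [card_subtype_ne]; omega
  · intro S' hS'
    set L : Set V := (Subtype.val '' S') ∪ {a} with hL
    have hLn : L.ncard < 5 := by
      have h1 : L.ncard ≤ (Subtype.val '' S').ncard + ({a} : Set V).ncard :=
        Set.ncard_union_le _ _
      have h2 : (Subtype.val '' S').ncard = S'.ncard :=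
        Set.ncard_image_of_injective _ Subtype.val_injective
      simp only [Set.ncard_singleton] at h1
      omega
    have hconn := h5.2 L hLn
    -- the graph hom
    have hmem : ∀ v : ↥(Lᶜ), (v : V) ≠ a ∧ ∀ hne : (v:V) ≠ a, (⟨v, hne⟩ : {u : V // u ≠ a}) ∉ S' := by
      intro v
      have hv' : ¬((v : V) ∈ Subtype.val '' S' ∨ (v : V) ∈ ({a} : Set V)) := by
        intro h
        apply v.2
        show (v : V) ∈ Subtype.val '' S' ∪ {a}
        rcases h with h | h
        · exact Set.mem_union_left _ h
        · exact Set.mem_union_right _ h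
      push_neg at hv'
      refine ⟨by simpa using hv'.2, fun hne hmem => hv'.1 ⟨⟨v, hne⟩, hmem, rfl⟩⟩
    let f : (G.induce Lᶜ) →g ((contractE G x a).induce S'ᶜ) :=
      { toFun := fun v => ⟨⟨v.1, (hmem v).1⟩, (hmem v).2 (hmem v).1⟩
        map_rel' := fun {u v} h => contract_adj_of_adj h }
    rw [SimpleGraph.connected_iff]
    refine ⟨?_, ?_⟩
    · intro u w
      have hu : u.1.1 ∈ Lᶜ := by
        rw [hL, Set.compl_union]
        exact ⟨fun hm => by
          obtain ⟨s, hs, hse⟩ := hm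
          exact u.2 ((Subtype.ext hse : s = u.1) ▸ hs), u.1.2⟩
      have hw : w.1.1 ∈ Lᶜ := by
        rw [hL, Set.compl_union]
        exact ⟨fun hm => by
          obtain ⟨s, hs, hse⟩ := hm
          exact w.2 ((Subtype.ext hse : s = w.1) ▸ hs), w.1.2⟩
      have hr := hconn.preconnected ⟨u.1.1, hu⟩ ⟨w.1.1, hw⟩
      have := hr.map f
      have he1 : f ⟨u.1.1, hu⟩ = u := Subtype.ext (Subtype.ext rfl)
      have he2 : f ⟨w.1.1, hw⟩ = w := Subtype.ext (Subtype.ext rfl)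
      rwa [he1, he2] at this
    · obtain ⟨v⟩ := hconn.nonempty
      exact ⟨f v⟩

lemma lift_notin [Fintype V] [DecidableEq V] {G : SimpleGraph V}
    (h5 : IsKConnected 5 G) {x a : V} (hxa : x ≠ a) {T₁ P Q : Set {v : V // v ≠ a}}
    (hT4 : T₁.ncard = 4) (hQn : Q.Nonempty) (hdis : Disjoint P Q)
    (hun : P ∪ Q = T₁ᶜ) (hnoe : ∀ p ∈ P, ∀ q ∈ Q, ¬ (contractE G x a).Adj p q)
    (hxP : (⟨x, hxa⟩ : {v : V // v ≠ a}) ∈ P) : False := by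
  have hsep : Separates G (Subtype.val '' T₁) := by
    refine ⟨Subtype.val '' P ∪ {a}, Subtype.val '' Q, ⟨a, Or.inr rfl⟩,
      hQn.image _, ?_, ?_, ?_⟩
    · rw [Set.disjoint_union_left]
      refine ⟨Set.disjoint_image_of_injective Subtype.val_injective hdis, ?_⟩
      rw [Set.disjoint_left]
      rintro v rfl ⟨q, _, hq⟩
      exact q.2 hq
    · ext v
      simp only [Set.mem_union, Set.mem_image, Set.mem_singleton_iff,
        Set.mem_compl_iff]
      constructor
      · rintro ((⟨p, hp, rfl⟩ | rfl) | ⟨q, hq, rfl⟩)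
        · rintro ⟨t, ht, hte⟩
          rw [Subtype.val_injective hte] at ht
          have : p ∈ T₁ᶜ := hun ▸ Or.inl hp
          exact this ht
        · rintro ⟨t, _, hte⟩
          exact t.2 hte
        · rintro ⟨t, ht, hte⟩
          rw [Subtype.val_injective hte] at ht
          have : q ∈ T₁ᶜ := hun ▸ Or.inr hq
          exact this ht
      · intro hv
        by_cases hva : v = a
        · exact Or.inl (Or.inr hva)
        · have : (⟨v, hva⟩ : {u : V // u ≠ a}) ∈ P ∪ Q := by
            rw [hun]
            exact fun ht => hv ⟨⟨v, hva⟩, ht, rfl⟩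
          rcases this with h | h
          · exact Or.inl (Or.inl ⟨_, h, rfl⟩)
          · exact Or.inr ⟨_, h, rfl⟩
    · rintro p' hp' q' ⟨q, hq, rfl⟩ hadj
      rcases hp' with ⟨p, hp, rfl⟩ | hpa
      · exact hnoe p hp q hq (contract_adj_of_adj hadj)
      · refine hnoe _ hxP q hq (contract_adj_x hxa (hpa ▸ hadj) ?_)
        intro hxq
        have : (⟨x, hxa⟩ : {u : V // u ≠ a}) ∈ Q := by
          rw [show (⟨x, hxa⟩ : {u : V // u ≠ a}) = q from Subtype.ext hxq]
          exact hq
        exact Set.disjoint_left.mp hdis hxP this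
  have := sep_ge h5 hsep
  rw [Set.ncard_image_of_injective _ Subtype.val_injective, hT4] at this
  omega

lemma lift_cut [Fintype V] [DecidableEq V] {G : SimpleGraph V}
    (h5 : IsKConnected 5 G) {x a : V} (hxa : x ≠ a)
    {T₁ : Set {v : V // v ≠ a}} (hT₁ : IsNontrivialFourCut (contractE G x a) T₁) :
    ∃ S B C : Set V, S.ncard = 5 ∧ 2 ≤ B.ncard ∧ 2 ≤ C.ncard ∧ x ∈ S ∧ a ∈ S ∧
      Disjoint B S ∧ Disjoint B C ∧ Disjoint S C ∧ B ∪ S ∪ C = univ ∧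
      (∀ b ∈ B, ∀ c ∈ C, ¬ G.Adj b c) := by
  obtain ⟨hT4, P, Q, hP2, hQ2, hdis, hun, hnoe⟩ := hT₁
  have hPn : P.Nonempty := Set.nonempty_of_ncard_ne_zero (by omega)
  have hQn : Q.Nonempty := Set.nonempty_of_ncard_ne_zero (by omega)
  set xb : {v : V // v ≠ a} := ⟨x, hxa⟩ with hxb
  have hxT₁ : xb ∈ T₁ := by
    by_contra hxn
    have : xb ∈ P ∪ Q := hun ▸ hxn
    rcases this with h | h
    · exact lift_notin h5 hxa hT4 hQn hdis hun hnoe h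
    · refine lift_notin h5 hxa hT4 hPn hdis.symm ?_ ?_ h
      · rw [Set.union_comm]; exact hun
      · exact fun q hq p hp hadj => hnoe p hp q hq hadj.symm
  refine ⟨Subtype.val '' (T₁ \ {xb}) ∪ {x, a}, Subtype.val '' P, Subtype.val '' Q,
    ?_, ?_, ?_, ?_, ?_, ?_, ?_, ?_, ?_, ?_⟩
  · rw [Set.ncard_union_eq, Set.ncard_image_of_injective _ Subtype.val_injective,
      Set.ncard_diff_singleton_of_mem hxT₁, hT4, Set.ncard_pair hxa]
    · rw [Set.disjoint_left]
      rintro v ⟨t, ht, rfl⟩ hv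
      rcases hv with h | h
      · exact ht.2 (Subtype.ext h)
      · exact t.2 h
  · rwa [Set.ncard_image_of_injective _ Subtype.val_injective]
  · rwa [Set.ncard_image_of_injective _ Subtype.val_injective]
  · exact Or.inr (Or.inl rfl)
  · exact Or.inr (Or.inr rfl)
  · -- Disjoint B S
    rw [Set.disjoint_right]
    rintro v (⟨t, ht, rfl⟩ | hv) ⟨p, hp, hpe⟩
    · rw [Subtype.val_injective hpe] at hp
      have : t ∈ T₁ᶜ := hun ▸ Or.inl hp
      exact this ht.1
    · rcases hv with h | h
      · have hpq : p = xb := Subtype.ext (hpe.trans h)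
        have : xb ∈ T₁ᶜ := hun ▸ Or.inl (hpq ▸ hp)
        exact this hxT₁
      · exact p.2 (hpe.trans h)
  · exact Set.disjoint_image_of_injective Subtype.val_injective hdis
  · -- Disjoint S C
    rw [Set.disjoint_left]
    rintro v (⟨t, ht, rfl⟩ | hv) ⟨q, hq, hqe⟩
    · rw [Subtype.val_injective hqe] at hq
      have : t ∈ T₁ᶜ := hun ▸ Or.inr hq
      exact this ht.1
    · rcases hv with h | h
      · have hpq : q = xb := Subtype.ext (hqe.trans h)
        have : xb ∈ T₁ᶜ := hun ▸ Or.inr (hpq ▸ hq)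
        exact this hxT₁
      · exact q.2 (hqe.trans h)
  · -- cover
    ext v
    simp only [Set.mem_univ, iff_true, Set.mem_union]
    by_cases hva : v = a
    · exact Or.inl (Or.inr (Or.inr (Or.inr hva)))
    · by_cases hvx : v = x
      · exact Or.inl (Or.inr (Or.inr (Or.inl hvx)))
      · by_cases hvT : (⟨v, hva⟩ : {u : V // u ≠ a}) ∈ T₁
        · refine Or.inl (Or.inr (Or.inl ⟨⟨v, hva⟩, ⟨hvT, ?_⟩, rfl⟩))
          exact fun h => hvx (congrArg Subtype.val h)
        · have : (⟨v, hva⟩ : {u : V // u ≠ a}) ∈ P ∪ Q := hun ▸ hvT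
          rcases this with h | h
          · exact Or.inl (Or.inl ⟨_, h, rfl⟩)
          · exact Or.inr ⟨_, h, rfl⟩
  · rintro b ⟨p, hp, rfl⟩ c ⟨q, hq, rfl⟩ hadj
    exact hnoe p hp q hq (contract_adj_of_adj hadj)

lemma mem_empty_of {X : Set V} (hX : X = ∅) {v : V} (h : v ∈ X) : False := by
  rw [hX] at h; exact h

lemma ineq_one [Fintype V] {G : SimpleGraph V} (h5 : IsKConnected 5 G)
    {A T A' B S C : Set V} {x a : V}
    (hcoverV : A ∪ T ∪ A' = univ) (hcover2 : B ∪ S ∪ C = univ)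
    (hBS : Disjoint B S) (hBC : Disjoint B C) (hSC : Disjoint S C)
    (hxT : x ∈ T) (hxS : x ∈ S) (haS : a ∈ S)
    (huniq : ∀ w ∈ A, G.Adj x w → w = a)
    (hAA'e : ∀ v ∈ A, ∀ w ∈ A', ¬ G.Adj v w)
    (hBCe : ∀ b ∈ B, ∀ c ∈ C, ¬ G.Adj b c)
    (hABne : (A ∩ B).Nonempty) (hCne : C.Nonempty) :
    6 ≤ (A ∩ S).ncard + (T ∩ S).ncard + (T ∩ B).ncard := by
  obtain ⟨c₀, hc₀⟩ := hCne
  have hsub : gBoundary G (A ∩ B) ⊆ (A ∩ S) ∪ ((T ∩ S) \ {x}) ∪ (T ∩ B) := by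
    rintro v ⟨hvn, w, hw, hadj⟩
    have hvAT : v ∈ A ∨ v ∈ T := by
      have hv : v ∈ A ∪ T ∪ A' := hcoverV ▸ Set.mem_univ v
      rcases hv with (h | h) | h
      · exact Or.inl h
      · exact Or.inr h
      · exact absurd hadj.symm (hAA'e w hw.1 v h)
    have hvBS : v ∈ B ∨ v ∈ S := by
      have hv : v ∈ B ∪ S ∪ C := hcover2 ▸ Set.mem_univ v
      rcases hv with (h | h) | h
      · exact Or.inl h
      · exact Or.inr h
      · exact absurd hadj.symm (hBCe w hw.2 v h)
    rcases hvAT with h1 | h1 <;> rcases hvBS with h2 | h2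
    · exact absurd ⟨h1, h2⟩ hvn
    · exact Or.inl (Or.inl ⟨h1, h2⟩)
    · exact Or.inr ⟨h1, h2⟩
    · refine Or.inl (Or.inr ⟨⟨h1, h2⟩, fun hvx => ?_⟩)
      rw [Set.mem_singleton_iff] at hvx
      subst hvx
      have hwa := huniq w hw.1 hadj
      exact Set.disjoint_left.mp hBS (hwa ▸ hw.2) haS
  have h5' : 5 ≤ ((A ∩ S) ∪ ((T ∩ S) \ {x}) ∪ (T ∩ B)).ncard := by
    refine frag_ineq h5 hABne (v₀ := c₀) ?_ ?_ hsub
    · exact fun h => Set.disjoint_left.mp hBC h.2 hc₀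
    · intro h
      rcases hsub h with (h' | h') | h'
      · exact Set.disjoint_left.mp hSC h'.2 hc₀
      · exact Set.disjoint_left.mp hSC h'.1.2 hc₀
      · exact Set.disjoint_left.mp hBC h'.2 hc₀
  have hle : ((A ∩ S) ∪ ((T ∩ S) \ {x}) ∪ (T ∩ B)).ncard ≤
      ((A ∩ S).ncard + ((T ∩ S) \ {x}).ncard) + (T ∩ B).ncard :=
    le_trans (Set.ncard_union_le _ _) (Nat.add_le_add_right (Set.ncard_union_le _ _) _)
  have hd : ((T ∩ S) \ {x}).ncard = (T ∩ S).ncard - 1 :=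
    Set.ncard_diff_singleton_of_mem ⟨hxT, hxS⟩
  have hβ : 0 < (T ∩ S).ncard := (Set.ncard_pos (Set.toFinite _)).mpr ⟨x, hxT, hxS⟩
  omega

lemma ineq_two [Fintype V] {G : SimpleGraph V} (h5 : IsKConnected 5 G)
    {A T A' B S C : Set V} {a : V}
    (hcoverV : A ∪ T ∪ A' = univ) (hcover2 : B ∪ S ∪ C = univ)
    (hAT : Disjoint A T) (hAA' : Disjoint A A')
    (haA : a ∈ A)
    (hAA'e : ∀ v ∈ A, ∀ w ∈ A', ¬ G.Adj v w)
    (hBCe : ∀ b ∈ B, ∀ c ∈ C, ¬ G.Adj b c)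
    (hA'Bne : (A' ∩ B).Nonempty) :
    5 ≤ (A' ∩ S).ncard + (T ∩ S).ncard + (T ∩ B).ncard := by
  have hsub : gBoundary G (A' ∩ B) ⊆ (A' ∩ S) ∪ (T ∩ S) ∪ (T ∩ B) := by
    rintro v ⟨hvn, w, hw, hadj⟩
    have hvAT : v ∈ A' ∨ v ∈ T := by
      have hv : v ∈ A ∪ T ∪ A' := hcoverV ▸ Set.mem_univ v
      rcases hv with (h | h) | h
      · exact absurd hadj (hAA'e v h w hw.1)
      · exact Or.inr h
      · exact Or.inl h
    have hvBS : v ∈ B ∨ v ∈ S := by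
      have hv : v ∈ B ∪ S ∪ C := hcover2 ▸ Set.mem_univ v
      rcases hv with (h | h) | h
      · exact Or.inl h
      · exact Or.inr h
      · exact absurd hadj.symm (hBCe w hw.2 v h)
    rcases hvAT with h1 | h1 <;> rcases hvBS with h2 | h2
    · exact absurd ⟨h1, h2⟩ hvn
    · exact Or.inl (Or.inl ⟨h1, h2⟩)
    · exact Or.inr ⟨h1, h2⟩
    · exact Or.inl (Or.inr ⟨h1, h2⟩)
  have h5' : 5 ≤ ((A' ∩ S) ∪ (T ∩ S) ∪ (T ∩ B)).ncard := by
    refine frag_ineq h5 hA'Bne (v₀ := a) ?_ ?_ hsub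
    · exact fun h => Set.disjoint_left.mp hAA' haA h.1
    · intro h
      rcases hsub h with (h' | h') | h'
      · exact Set.disjoint_left.mp hAA' haA h'.1
      · exact Set.disjoint_left.mp hAT haA h'.1
      · exact Set.disjoint_left.mp hAT haA h'.1
  refine le_trans h5' (le_trans (Set.ncard_union_le _ _)
    (Nat.add_le_add_right (Set.ncard_union_le _ _) _))

lemma key_lemma [Fintype V] {G : SimpleGraph V} (h5 : IsKConnected 5 G)
    {A T A' B S C : Set V} {x a : V}
    (hcoverV : A ∪ T ∪ A' = univ) (hAT : Disjoint A T) (hAA' : Disjoint A A')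
    (hTA' : Disjoint T A')
    (hcover2 : B ∪ S ∪ C = univ) (hBS : Disjoint B S) (hBC : Disjoint B C)
    (hSC : Disjoint S C)
    (hTn : T.ncard = 5) (hSn : S.ncard = 5)
    (hCn : 2 ≤ C.ncard) (hA'n : 2 ≤ A'.ncard)
    (hxT : x ∈ T) (hxS : x ∈ S) (haA : a ∈ A) (haS : a ∈ S)
    (huniq : ∀ w ∈ A, G.Adj x w → w = a)
    (hAA'e : ∀ v ∈ A, ∀ w ∈ A', ¬ G.Adj v w)
    (hBCe : ∀ b ∈ B, ∀ c ∈ C, ¬ G.Adj b c)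
    (hAC : A ∩ C = ∅) (hA'C : A' ∩ C = ∅) :
    A.ncard ≤ 2 := by
  -- C ⊆ T
  have hCT : C ⊆ T := by
    intro c hc
    have hv : c ∈ A ∪ T ∪ A' := hcoverV ▸ Set.mem_univ c
    rcases hv with (h | h) | h
    · exact (mem_empty_of hAC ⟨h, hc⟩).elim
    · exact h
    · exact (mem_empty_of hA'C ⟨h, hc⟩).elim
  have hγ : 2 ≤ (T ∩ C).ncard := by
    rw [Set.inter_eq_right.mpr hCT]; exact hCn
  have hS5 : (A ∩ S).ncard + (T ∩ S).ncard + (A' ∩ S).ncard = 5 := by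
    rw [← ncard_split3 hcoverV hAT hAA' hTA']; exact hSn
  have hT5 : (T ∩ B).ncard + (T ∩ S).ncard + (T ∩ C).ncard = 5 := by
    have := ncard_split3 (X := T) hcover2 hBS hBC hSC
    rw [Set.inter_comm B T, Set.inter_comm S T, Set.inter_comm C T] at this
    rw [← this]; exact hTn
  have hq1 : 0 < (A ∩ S).ncard := (Set.ncard_pos (Set.toFinite _)).mpr ⟨a, haA, haS⟩
  have hβ1 : 0 < (T ∩ S).ncard := (Set.ncard_pos (Set.toFinite _)).mpr ⟨x, hxT, hxS⟩
  have hCne : C.Nonempty := Set.nonempty_of_ncard_ne_zero (by omega)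
  rcases (A ∩ B).eq_empty_or_nonempty with hAB | hAB
  · -- A ⊆ S
    have hASeq : A ∩ S = A := Set.inter_eq_left.mpr (by
      intro v hv
      have h2 : v ∈ B ∪ S ∪ C := hcover2 ▸ Set.mem_univ v
      rcases h2 with (h | h) | h
      · exact (mem_empty_of hAB ⟨hv, h⟩).elim
      · exact h
      · exact (mem_empty_of hAC ⟨hv, h⟩).elim)
    rw [← hASeq]
    rcases (A' ∩ B).eq_empty_or_nonempty with hA'B | hA'B
    · -- A' ⊆ S
      have hA'Seq : A' ∩ S = A' := Set.inter_eq_left.mpr (by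
        intro v hv
        have h2 : v ∈ B ∪ S ∪ C := hcover2 ▸ Set.mem_univ v
        rcases h2 with (h | h) | h
        · exact (mem_empty_of hA'B ⟨hv, h⟩).elim
        · exact h
        · exact (mem_empty_of hA'C ⟨hv, h⟩).elim)
      have hs2 : 2 ≤ (A' ∩ S).ncard := by rw [hA'Seq]; exact hA'n
      omega
    · have hI2 := ineq_two h5 hcoverV hcover2 hAT hAA' haA hAA'e hBCe hA'B
      omega
  · have hI1 := ineq_one h5 hcoverV hcover2 hBS hBC hSC hxT hxS haS huniq hAA'e
      hBCe hAB hCne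
    rcases (A' ∩ B).eq_empty_or_nonempty with hA'B | hA'B
    · have hA'Seq : A' ∩ S = A' := Set.inter_eq_left.mpr (by
        intro v hv
        have h2 : v ∈ B ∪ S ∪ C := hcover2 ▸ Set.mem_univ v
        rcases h2 with (h | h) | h
        · exact (mem_empty_of hA'B ⟨hv, h⟩).elim
        · exact h
        · exact (mem_empty_of hA'C ⟨hv, h⟩).elim)
      have hs2 : 2 ≤ (A' ∩ S).ncard := by rw [hA'Seq]; exact hA'n
      omega
    · have hI2 := ineq_two h5 hcoverV hcover2 hAT hAA' haA hAA'e hBCe hA'B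
      omega

lemma endgame [Fintype V] {G : SimpleGraph V} (h5 : IsKConnected 5 G)
    {A T A' B S C : Set V} {x a : V}
    (hcoverV : A ∪ T ∪ A' = univ) (hAT : Disjoint A T) (hAA' : Disjoint A A')
    (hTA' : Disjoint T A')
    (hcover2 : B ∪ S ∪ C = univ) (hBS : Disjoint B S) (hBC : Disjoint B C)
    (hSC : Disjoint S C)
    (hTn : T.ncard = 5) (hSn : S.ncard = 5)
    (hBn : 2 ≤ B.ncard) (hCn : 2 ≤ C.ncard) (hA'n : 2 ≤ A'.ncard)
    (hxT : x ∈ T) (hxS : x ∈ S) (haA : a ∈ A) (haS : a ∈ S)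
    (huniq : ∀ w ∈ A, G.Adj x w → w = a)
    (hAA'e : ∀ v ∈ A, ∀ w ∈ A', ¬ G.Adj v w)
    (hBCe : ∀ b ∈ B, ∀ c ∈ C, ¬ G.Adj b c) :
    A.ncard ≤ 2 := by
  -- swapped versions of the B/C data
  have hcover2' : C ∪ S ∪ B = univ := by
    rw [← hcover2]; ext v
    simp only [Set.mem_union]; tauto
  have hBCe' : ∀ c ∈ C, ∀ b ∈ B, ¬ G.Adj c b :=
    fun c hc b hb h => hBCe b hb c hc h.symm
  have hCS : Disjoint C S := hSC.symm
  have hCB : Disjoint C B := hBC.symm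
  have hSB : Disjoint S B := hBS.symm
  have hBne : B.Nonempty := Set.nonempty_of_ncard_ne_zero (by omega)
  have hCne : C.Nonempty := Set.nonempty_of_ncard_ne_zero (by omega)
  -- basic counts
  have hS5 : (A ∩ S).ncard + (T ∩ S).ncard + (A' ∩ S).ncard = 5 := by
    rw [← ncard_split3 hcoverV hAT hAA' hTA']; exact hSn
  have hT5 : (T ∩ B).ncard + (T ∩ S).ncard + (T ∩ C).ncard = 5 := by
    have := ncard_split3 (X := T) hcover2 hBS hBC hSC
    rw [Set.inter_comm B T, Set.inter_comm S T, Set.inter_comm C T] at this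
    rw [← this]; exact hTn
  have hq1 : 0 < (A ∩ S).ncard := (Set.ncard_pos (Set.toFinite _)).mpr ⟨a, haA, haS⟩
  have hβ1 : 0 < (T ∩ S).ncard := (Set.ncard_pos (Set.toFinite _)).mpr ⟨x, hxT, hxS⟩
  -- the two mixed contradictions
  have hIC : (A ∩ B).Nonempty → (A' ∩ C).Nonempty → False := by
    intro h1 h2
    have hI1 := ineq_one h5 hcoverV hcover2 hBS hBC hSC hxT hxS haS huniq hAA'e
      hBCe h1 hCne
    have hI2 := ineq_two h5 hcoverV hcover2' hAT hAA' haA hAA'e hBCe' h2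
    omega
  have hIB : (A ∩ C).Nonempty → (A' ∩ B).Nonempty → False := by
    intro h1 h2
    have hI1 := ineq_one h5 hcoverV hcover2' hCS hCB hSB hxT hxS haS huniq hAA'e
      hBCe' h1 hBne
    have hI2 := ineq_two h5 hcoverV hcover2 hAT hAA' haA hAA'e hBCe h2
    omega
  rcases (A ∩ B).eq_empty_or_nonempty with hAB | hAB <;>
    rcases (A ∩ C).eq_empty_or_nonempty with hAC | hAC
  · -- both empty
    rcases (A' ∩ C).eq_empty_or_nonempty with hA'C | hA'C
    · exact key_lemma h5 hcoverV hAT hAA' hTA' hcover2 hBS hBC hSC hTn hSn hCn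
        hA'n hxT hxS haA haS huniq hAA'e hBCe hAC hA'C
    · rcases (A' ∩ B).eq_empty_or_nonempty with hA'B | hA'B
      · exact key_lemma h5 hcoverV hAT hAA' hTA' hcover2' hCS hCB hSB hTn hSn hBn
          hA'n hxT hxS haA haS huniq hAA'e hBCe' hAB hA'B
      · -- both A'∩B and A'∩C nonempty, A ⊆ S
        have hI2B := ineq_two h5 hcoverV hcover2 hAT hAA' haA hAA'e hBCe hA'B
        have hI2C := ineq_two h5 hcoverV hcover2' hAT hAA' haA hAA'e hBCe' hA'C
        have hASeq : A ∩ S = A := Set.inter_eq_left.mpr (by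
          intro v hv
          have h2 : v ∈ B ∪ S ∪ C := hcover2 ▸ Set.mem_univ v
          rcases h2 with (h | h) | h
          · exact (mem_empty_of hAB ⟨hv, h⟩).elim
          · exact h
          · exact (mem_empty_of hAC ⟨hv, h⟩).elim)
        have hTC5 : (T ∩ C).ncard + (T ∩ S).ncard + (T ∩ B).ncard = 5 := by omega
        rw [← hASeq]
        omega
  · -- A∩B empty, A∩C nonempty
    have hA'B : A' ∩ B = ∅ := by
      rcases (A' ∩ B).eq_empty_or_nonempty with h | h
      · exact h
      · exact absurd (hIB hAC h) not_false
    exact key_lemma h5 hcoverV hAT hAA' hTA' hcover2' hCS hCB hSB hTn hSn hBn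
      hA'n hxT hxS haA haS huniq hAA'e hBCe' hAB hA'B
  · -- A∩B nonempty, A∩C empty
    have hA'C : A' ∩ C = ∅ := by
      rcases (A' ∩ C).eq_empty_or_nonempty with h | h
      · exact h
      · exact absurd (hIC hAB h) not_false
    exact key_lemma h5 hcoverV hAT hAA' hTA' hcover2 hBS hBC hSC hTn hSn hCn
      hA'n hxT hxS haA haS huniq hAA'e hBCe hAC hA'C
  · -- both nonempty
    have hA'C : A' ∩ C = ∅ := by
      rcases (A' ∩ C).eq_empty_or_nonempty with h | h
      · exact h
      · exact absurd (hIC hAB h) not_false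
    have hA'B : A' ∩ B = ∅ := by
      rcases (A' ∩ B).eq_empty_or_nonempty with h | h
      · exact h
      · exact absurd (hIB hAC h) not_false
    have hI1B := ineq_one h5 hcoverV hcover2 hBS hBC hSC hxT hxS haS huniq hAA'e
      hBCe hAB hCne
    have hI1C := ineq_one h5 hcoverV hcover2' hCS hCB hSB hxT hxS haS huniq hAA'e
      hBCe' hAC hBne
    have hA'Seq : A' ∩ S = A' := Set.inter_eq_left.mpr (by
      intro v hv
      have h2 : v ∈ B ∪ S ∪ C := hcover2 ▸ Set.mem_univ v
      rcases h2 with (h | h) | h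
      · exact (mem_empty_of hA'B ⟨hv, h⟩).elim
      · exact h
      · exact (mem_empty_of hA'C ⟨hv, h⟩).elim)
    have hs2 : 2 ≤ (A' ∩ S).ncard := by rw [hA'Seq]; exact hA'n
    omega


end Aux

/-- In a 5-connected, contraction critical quasi 5-connected graph,
a nontrivial fragment having a vertex of its neighborhood with exactly one
neighbor inside it has exactly two vertices. -/
theorem stmt2 {V : Type*} [Fintype V] [DecidableEq V] (G : SimpleGraph V)
    (h5 : IsKConnected 5 G) (hcc : ContractionCriticalQuasiFive G)
    (A : Set V) (hA : IsNontrivialFragment G A)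
    (x : V) (hx : x ∈ gBoundary G A) (h1 : (G.neighborSet x ∩ A).ncard = 1) :
    A.ncard = 2 := by
  obtain ⟨⟨hAne, hfarne, hmin⟩, hA2, hA'2⟩ := hA
  obtain ⟨a, hae⟩ := Set.ncard_eq_one.mp h1
  have hamem : a ∈ G.neighborSet x ∩ A := hae ▸ rfl
  have haA : a ∈ A := hamem.2
  have hadj : G.Adj x a := hamem.1
  have huniq : ∀ w ∈ A, G.Adj x w → w = a := by
    intro w hw hxw
    have hm : w ∈ G.neighborSet x ∩ A := ⟨hxw, hw⟩
    rw [hae] at hm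
    exact hm
  have hxa : x ≠ a := G.ne_of_adj hadj
  -- the contracted graph has a nontrivial 4-cut
  have hnq := hcc.2 x a hadj
  have h4c := contract_fourconn h5 hadj
  have hex : ∃ T₁, IsNontrivialFourCut (contractE G x a) T₁ := by
    by_contra hno
    push_neg at hno
    exact hnq ⟨h4c, hno⟩
  obtain ⟨T₁, hT₁⟩ := hex
  obtain ⟨S, B, C, hSn, hBn, hCn, hxS, haS, hBS, hBC, hSC, hcover2, hBCe⟩ :=
    lift_cut h5 hxa hT₁
  -- facts about the fragment partition
  have hAT : Disjoint A (gBoundary G A) :=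
    Set.disjoint_left.mpr (fun v hv ht => ht.1 hv)
  have hAA' : Disjoint A (Aᶜ \ gBoundary G A) :=
    Set.disjoint_left.mpr (fun v hv h => h.1 hv)
  have hTA' : Disjoint (gBoundary G A) (Aᶜ \ gBoundary G A) :=
    Set.disjoint_left.mpr (fun v hv h => h.2 hv)
  have hcoverV : A ∪ gBoundary G A ∪ (Aᶜ \ gBoundary G A) = univ := by
    ext v
    simp only [Set.mem_univ, iff_true, Set.mem_union, Set.mem_diff,
      Set.mem_compl_iff]
    by_cases hvA : v ∈ A
    · exact Or.inl (Or.inl hvA)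
    · by_cases hvT : v ∈ gBoundary G A
      · exact Or.inl (Or.inr hvT)
      · exact Or.inr ⟨hvA, hvT⟩
  have hAA'e : ∀ v ∈ A, ∀ w ∈ Aᶜ \ gBoundary G A, ¬ G.Adj v w := by
    intro v hv w hw hvw
    exact hw.2 ⟨hw.1, v, hv, hvw.symm⟩
  -- |T| = 5
  have hBne : B.Nonempty := Set.nonempty_of_ncard_ne_zero (by omega)
  have hCne : C.Nonempty := Set.nonempty_of_ncard_ne_zero (by omega)
  have hsepS : Separates G S := by
    refine ⟨B, C, hBne, hCne, hBC, ?_, hBCe⟩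
    ext v
    simp only [Set.mem_union, Set.mem_compl_iff]
    constructor
    · rintro (h | h)
      · exact fun hS => Set.disjoint_left.mp hBS h hS
      · exact fun hS => Set.disjoint_left.mp hSC hS h
    · intro hvS
      have hv : v ∈ B ∪ S ∪ C := hcover2 ▸ Set.mem_univ v
      rcases hv with (h | h) | h
      · exact Or.inl h
      · exact absurd h hvS
      · exact Or.inr h
  have hT5 : (gBoundary G A).ncard = 5 := by
    have hle : (gBoundary G A).ncard ≤ 5 := hSn ▸ hmin S hsepS
    have hge : 5 ≤ (gBoundary G A).ncard :=
      sep_ge h5 (boundary_separates hAne hfarne)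
    omega
  have hfinal := endgame h5 hcoverV hAT hAA' hTA' hcover2 hBS hBC hSC hT5 hSn
    hBn hCn hA'2 hx hxS haA haS huniq hAA'e hBCe
  omega
end

section
/- Let G be a quasi 5-connected graph and xy ∈ E(G). If the minimum degree of G/xy is at least 4, then G/xy is 4-connected. -/
open SimpleGraph Set

variable {V : Type*}

lemma separates_not_connected {W : Type*} {H : SimpleGraph W} {T A B : Set W}
    (hB : B.Nonempty) (hd : Disjoint A B) (hu : A ∪ B = Tᶜ)
    (he : ∀ a ∈ A, ∀ b ∈ B, ¬H.Adj a b) {a : W} (ha : a ∈ A) :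
    ¬(H.induce Tᶜ).Connected := by
  intro hc
  obtain ⟨b, hb⟩ := hB
  have haT : a ∈ Tᶜ := hu ▸ Or.inl ha
  have hbT : b ∈ Tᶜ := hu ▸ Or.inr hb
  obtain ⟨p⟩ := hc.preconnected ⟨a, haT⟩ ⟨b, hbT⟩
  have claim : ∀ {u w : ↑(Tᶜ : Set W)} (_ : (H.induce Tᶜ).Walk u w), u.val ∈ A → w.val ∈ A := by
    intro u w p
    induction p with
    | nil => exact id
    | @cons u' v' w' h p ih =>
      intro hu'
      apply ih
      have hadj : H.Adj u'.val v'.val := h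
      have hv : v'.val ∈ A ∪ B := by rw [hu]; exact v'.2
      rcases hv with h' | h'
      · exact h'
      · exact absurd hadj (he _ hu' _ h')
  exact Set.disjoint_left.mp hd (claim p ha) hb

lemma not_connected_separates {W : Type*} {H : SimpleGraph W} {T : Set W}
    (hne : Tᶜ.Nonempty) (h : ¬(H.induce Tᶜ).Connected) :
    ∃ A B : Set W, A.Nonempty ∧ B.Nonempty ∧ Disjoint A B ∧ A ∪ B = Tᶜ ∧
      ∀ a ∈ A, ∀ b ∈ B, ¬H.Adj a b := by
  obtain ⟨u0, hu0⟩ := hne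
  haveI : Nonempty ↥(Tᶜ) := ⟨⟨u0, hu0⟩⟩
  have hnp : ¬(H.induce Tᶜ).Preconnected := fun hp => h ⟨hp⟩
  simp only [SimpleGraph.Preconnected, not_forall] at hnp
  obtain ⟨u, w, hw⟩ := hnp
  refine ⟨Subtype.val '' {z | (H.induce Tᶜ).Reachable u z},
    Tᶜ \ Subtype.val '' {z | (H.induce Tᶜ).Reachable u z}, ⟨u.val, ⟨u, SimpleGraph.Reachable.refl u, rfl⟩⟩,
    ⟨w.val, w.2, ?_⟩, Set.disjoint_sdiff_right, Set.union_diff_cancel ?_, ?_⟩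
  · rintro ⟨z, hz, hzw⟩
    exact hw (Subtype.ext hzw ▸ hz)
  · rintro v ⟨z, _, rfl⟩; exact z.2
  · rintro a ⟨z, hz, rfl⟩ b ⟨hbT, hbA⟩ hadj
    exact hbA ⟨⟨b, hbT⟩, hz.trans (SimpleGraph.Adj.reachable (by exact hadj)), rfl⟩

lemma contractE_adj {V : Type*} [DecidableEq V] (G : SimpleGraph V) (x y : V)
    (a b : {v : V // v ≠ y}) :
    (contractE G x y).Adj a b ↔ a ≠ b ∧
      (G.Adj a.1 b.1 ∨ (a.1 = x ∧ G.Adj y b.1) ∨ (b.1 = x ∧ G.Adj y a.1)) := by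
  rw [contractE, SimpleGraph.fromRel_adj]
  constructor
  · rintro ⟨h1, h2 | h2⟩
    · exact ⟨h1, h2⟩
    · refine ⟨h1, ?_⟩
      rcases h2 with h | ⟨h3, h4⟩ | ⟨h3, h4⟩
      · exact Or.inl h.symm
      · exact Or.inr (Or.inr ⟨h3, h4⟩)
      · exact Or.inr (Or.inl ⟨h3, h4⟩)
  · rintro ⟨h1, h2⟩
    exact ⟨h1, Or.inl h2⟩

lemma memval {V : Type*} {y : V} (C : Set {v : V // v ≠ y}) (v : V) (hv : v ≠ y) :
    v ∈ Subtype.val '' C ↔ ⟨v, hv⟩ ∈ C := by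
  constructor
  · rintro ⟨z, hz, rfl⟩; exact hz
  · intro h; exact ⟨_, h, rfl⟩

/-- If `G` is quasi 5-connected, `xy ∈ E(G)` and `G/xy` has
minimum degree at least 4, then `G/xy` is 4-connected. -/
theorem stmt3 {V : Type*} [Fintype V] [DecidableEq V] (G : SimpleGraph V)
    (hG : QuasiFiveConnected G) (x y : V) (hxy : G.Adj x y)
    (hdeg : ∀ v : {v : V // v ≠ y}, 4 ≤ ((contractE G x y).neighborSet v).ncard) :
    IsKConnected 4 (contractE G x y) := by
  have hxne : x ≠ y := hxy.ne
  have hGc := hG.1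
  have hmin : ∀ T : Set V, Separates G T → 4 ≤ T.ncard := by
    intro T hT
    by_contra hlt
    push_neg at hlt
    obtain ⟨A, B, hA, hB, hd, hu, he⟩ := hT
    obtain ⟨a, ha⟩ := hA
    exact separates_not_connected hB hd hu he ha (hGc.2 T hlt)
  have hcard : 5 ≤ Fintype.card {v : V // v ≠ y} := by
    have h4 := hdeg ⟨x, hxne⟩
    have hsub : (contractE G x y).neighborSet ⟨x, hxne⟩ ⊆
        ({(⟨x, hxne⟩ : {v : V // v ≠ y})} : Set _)ᶜ := by
      intro u hu
      simp only [Set.mem_compl_iff, Set.mem_singleton_iff]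
      rintro rfl
      exact (contractE G x y).loopless.irrefl _ hu
    have h1 : ((contractE G x y).neighborSet ⟨x, hxne⟩).ncard ≤
        (({(⟨x, hxne⟩ : {v : V // v ≠ y})} : Set _)ᶜ).ncard :=
      Set.ncard_le_ncard hsub (Set.toFinite _)
    have h2 := Set.ncard_add_ncard_compl ({(⟨x, hxne⟩ : {v : V // v ≠ y})} : Set _)
    rw [Set.ncard_singleton, Nat.card_eq_fintype_card] at h2
    omega
  refine ⟨hcard, ?_⟩
  intro S hS
  by_contra hnc
  have hScn : (Sᶜ : Set {v : V // v ≠ y}).Nonempty := by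
    rw [Set.nonempty_compl]
    intro hSu
    rw [hSu, Set.ncard_univ, Nat.card_eq_fintype_card] at hS
    omega
  obtain ⟨A, B, hA, hB, hd, hu, he⟩ := not_connected_separates hScn hnc
  by_cases hxS : (⟨x, hxne⟩ : {v : V // v ≠ y}) ∈ S
  · -- x-vertex in the cut: lift to a 4-cut of G containing x and y
    set S' : Set V := insert y (Subtype.val '' S) with hS'def
    set A' : Set V := Subtype.val '' A with hA'def
    set B' : Set V := Subtype.val '' B with hB'def
    have hyS' : y ∈ S' := Set.mem_insert _ _
    have hxS' : x ∈ S' := Set.mem_insert_iff.mpr (Or.inr ⟨⟨x, hxne⟩, hxS, rfl⟩)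
    have hunion : A' ∪ B' = S'ᶜ := by
      ext v
      by_cases hvy : v = y
      · subst hvy
        constructor
        · rintro (⟨z, _, hz⟩ | ⟨z, _, hz⟩) <;> exact absurd hz z.2
        · intro hv; exact absurd hyS' hv
      · have hz := Set.ext_iff.mp hu ⟨v, hvy⟩
        rw [Set.mem_union] at hz
        rw [Set.mem_union, hA'def, hB'def, memval A v hvy, memval B v hvy,
          Set.mem_compl_iff, hS'def, Set.mem_insert_iff]
        constructor
        · rintro (h' | h') h''
          · rcases h'' with h'' | h''
            · exact hvy h''
            · have hvc : (⟨v, hvy⟩ : {v : V // v ≠ y}) ∈ Sᶜ := by rw [← hu]; exact Or.inl h'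
              exact hvc ((memval S v hvy).mp h'')
          · rcases h'' with h'' | h''
            · exact hvy h''
            · have hvc : (⟨v, hvy⟩ : {v : V // v ≠ y}) ∈ Sᶜ := by rw [← hu]; exact Or.inr h'
              exact hvc ((memval S v hvy).mp h'')
        · intro h''
          have hvS : (⟨v, hvy⟩ : {v : V // v ≠ y}) ∉ S := fun hmem =>
            h'' (Or.inr ((memval S v hvy).mpr hmem))
          exact hz.mpr hvS
    have hdisj : Disjoint A' B' := by
      rw [hA'def, hB'def, Set.disjoint_left]
      rintro v ⟨a, haA, rfl⟩ ⟨b, hbB, hba⟩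
      have : b = a := Subtype.ext hba
      exact Set.disjoint_left.mp hd haA (this ▸ hbB)
    have hedges : ∀ a ∈ A', ∀ b ∈ B', ¬G.Adj a b := by
      rintro a ⟨za, hza, rfl⟩ b ⟨zb, hzb, rfl⟩ hadj
      refine he za hza zb hzb ((contractE_adj G x y za zb).mpr ⟨?_, Or.inl hadj⟩)
      exact fun h => Set.disjoint_left.mp hd (h ▸ hza) hzb
    have hsep : Separates G S' :=
      ⟨A', B', hA.image _, hB.image _, hdisj, hunion, hedges⟩
    have h4 := hmin _ hsep
    have hSim : (Subtype.val '' S).ncard = S.ncard :=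
      Set.ncard_image_of_injective _ Subtype.val_injective
    have hyim : y ∉ Subtype.val '' S := by rintro ⟨z, _, hz⟩; exact z.2 hz
    have hS'card : S'.ncard = 4 := by
      rw [hS'def, Set.ncard_insert_of_notMem hyim (Set.toFinite _), hSim]
      rw [hS'def, Set.ncard_insert_of_notMem hyim (Set.toFinite _), hSim] at h4
      omega
    have hA2 : A'.ncard = 1 ∨ B'.ncard = 1 := by
      by_contra hcon
      push_neg at hcon
      have hApos := (Set.ncard_pos (Set.toFinite A')).mpr (hA.image _)
      have hBpos := (Set.ncard_pos (Set.toFinite B')).mpr (hB.image _)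
      exact hG.2 S' ⟨hS'card, A', B', by omega, by omega, hdisj, hunion, hedges⟩
    have final : ∀ (C D : Set V), C ∪ D = S'ᶜ → (∀ c ∈ C, ∀ d ∈ D, ¬G.Adj c d) →
        ∀ v, C = {v} → False := by
      intro C D hCD hCDe v hv
      have hvC : v ∈ C := by rw [hv]; exact Set.mem_singleton v
      have hvS' : v ∉ S' := by
        have : v ∈ S'ᶜ := hCD ▸ Or.inl hvC
        exact this
      have hvy : v ≠ y := fun h => hvS' (h ▸ hyS')
      have hvx : v ≠ x := fun h => hvS' (h ▸ hxS')
      have hN : ∀ u, G.Adj v u → u ∈ S' := by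
        intro u hadj
        by_contra huS
        have : u ∈ C ∪ D := by rw [hCD]; exact huS
        rcases this with hC | hD
        · rw [hv, Set.mem_singleton_iff] at hC
          exact G.loopless.irrefl v (hC ▸ hadj)
        · exact hCDe v hvC u hD hadj
      have himg : Subtype.val '' ((contractE G x y).neighborSet ⟨v, hvy⟩) ⊆ S' \ {y} := by
        rintro u' ⟨u, hu, rfl⟩
        refine ⟨?_, fun h => u.2 h⟩
        rw [SimpleGraph.mem_neighborSet, contractE_adj] at hu
        rcases hu.2 with h | ⟨h1, _⟩ | ⟨h1, _⟩
        · exact hN u.val h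
        · exact absurd h1 hvx
        · rw [h1]; exact hxS'
      have hle := Set.ncard_le_ncard himg (Set.toFinite _)
      rw [Set.ncard_image_of_injective _ Subtype.val_injective] at hle
      have hdiff : (S' \ {y}).ncard = 3 := by
        rw [Set.ncard_diff_singleton_of_mem hyS', hS'card]
      have := hdeg ⟨v, hvy⟩
      omega
    rcases hA2 with h1 | h1
    · obtain ⟨v, hv⟩ := Set.ncard_eq_one.mp h1
      exact final A' B' hunion hedges v hv
    · obtain ⟨v, hv⟩ := Set.ncard_eq_one.mp h1
      exact final B' A' (by rw [Set.union_comm]; exact hunion)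
        (fun c hc d hd h => hedges d hd c hc h.symm) v hv
  · -- x-vertex not in the cut: lift to a cut of size < 4 in G
    have key2 : ∀ A B : Set {v : V // v ≠ y}, B.Nonempty → Disjoint A B → A ∪ B = Sᶜ →
        (∀ a ∈ A, ∀ b ∈ B, ¬(contractE G x y).Adj a b) →
        (⟨x, hxne⟩ : {v : V // v ≠ y}) ∈ A → False := by
      intro A B hB hd hu he hxA
      have hsep : Separates G (Subtype.val '' S) := by
        refine ⟨insert y (Subtype.val '' A), Subtype.val '' B, ⟨y, Set.mem_insert _ _⟩,
          hB.image _, ?_, ?_, ?_⟩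
        · rw [Set.disjoint_left]
          rintro v hv ⟨b, hbB, rfl⟩
          rcases Set.mem_insert_iff.mp hv with h | ⟨a, haA, hab⟩
          · exact b.2 h
          · have : a = b := Subtype.ext hab
            exact Set.disjoint_left.mp hd (this ▸ haA) hbB
        · ext v
          by_cases hvy : v = y
          · subst hvy
            constructor
            · rintro _ ⟨z, _, hz⟩; exact z.2 hz
            · intro _; exact Or.inl (Set.mem_insert _ _)
          · have hz := Set.ext_iff.mp hu ⟨v, hvy⟩
            rw [Set.mem_union] at hz
            rw [Set.mem_union, Set.mem_insert_iff, memval A v hvy, memval B v hvy,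
              Set.mem_compl_iff, memval S v hvy]
            constructor
            · rintro ((h' | h') | h')
              · exact absurd h' hvy
              · exact hz.mp (Or.inl h')
              · exact hz.mp (Or.inr h')
            · intro hS'
              rcases hz.mpr hS' with h' | h'
              · exact Or.inl (Or.inr h')
              · exact Or.inr h'
        · rintro a ha b ⟨zb, hzb, rfl⟩ hadj
          rcases Set.mem_insert_iff.mp ha with hay | ⟨za, hza, rfl⟩
          · rw [hay] at hadj
            refine he ⟨x, hxne⟩ hxA zb hzb ((contractE_adj G x y _ zb).mpr
              ⟨?_, Or.inr (Or.inl ⟨rfl, hadj⟩)⟩)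
            exact fun h => Set.disjoint_left.mp hd (h ▸ hxA) hzb
          · refine he za hza zb hzb ((contractE_adj G x y za zb).mpr ⟨?_, Or.inl hadj⟩)
            exact fun h => Set.disjoint_left.mp hd (h ▸ hza) hzb
      have h4 := hmin _ hsep
      rw [Set.ncard_image_of_injective _ Subtype.val_injective] at h4
      omega
    have hxAB : (⟨x, hxne⟩ : {v : V // v ≠ y}) ∈ A ∪ B := by
      rw [hu]; exact hxS
    rcases hxAB with hxA | hxB
    · exact key2 A B hB hd hu he hxA
    · exact key2 B A hA hd.symm (by rw [Set.union_comm]; exact hu)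
        (fun a ha b hb h => he b hb a ha h.symm) hxB
end

section
/- If G is a graph that is both 5-connected and contraction critical quasi 5-connected (no edge of G is quasi 5-contractible), then |V(G)| ≥ 10. -/
open SimpleGraph Set

variable {V : Type*}

set_option linter.unusedSectionVars false

section Aux
variable [Fintype V] [DecidableEq V] {G : SimpleGraph V}

lemma disc {S X Y : Set V} (hco : X ∪ Y = Sᶜ) (hX : X.Nonempty) (hY : Y.Nonempty)
    (hdisj : Disjoint X Y) (hedge : ∀ a ∈ X, ∀ b ∈ Y, ¬G.Adj a b) :
    ¬(G.induce Sᶜ).Connected := by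
  intro hconn
  obtain ⟨x, hx⟩ := hX
  obtain ⟨y, hy⟩ := hY
  have hx' : x ∈ Sᶜ := hco ▸ Set.mem_union_left _ hx
  have hy' : y ∈ Sᶜ := hco ▸ Set.mem_union_right _ hy
  obtain ⟨w⟩ := hconn.preconnected ⟨x, hx'⟩ ⟨y, hy'⟩
  have key : ∀ (a b : {z // z ∈ Sᶜ}) (_ : (G.induce Sᶜ).Walk a b), a.1 ∈ X → b.1 ∈ X := by
    intro a b w
    induction w with
    | nil => exact fun h => h
    | cons h p ih =>
      intro ha
      rename_i c _
      have hGadj : G.Adj _ _ := h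
      have hc : c.1 ∈ X ∪ Y := hco.symm ▸ c.2
      rcases hc with hc | hc
      · exact ih hc
      · exact absurd hGadj (hedge _ ha _ hc)
  have := key _ _ w hx
  exact (hdisj.ne_of_mem this hy) rfl

lemma mindeg (h5 : IsKConnected 5 G) (v : V) : 5 ≤ (G.neighborSet v).ncard := by
  by_contra hlt
  push_neg at hlt
  have hconn := h5.2 (G.neighborSet v) hlt
  have hvc : v ∈ (G.neighborSet v)ᶜ := by simp [neighborSet]
  have hcc : 2 ≤ ((G.neighborSet v)ᶜ).ncard := by
    have h1 := Set.ncard_add_ncard_compl (G.neighborSet v)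
    have h2 : Nat.card V = Fintype.card V := Nat.card_eq_fintype_card
    have h3 := h5.1
    omega
  have hY : ((G.neighborSet v)ᶜ \ {v}).Nonempty := by
    rw [Set.nonempty_iff_ne_empty]
    intro hempty
    have hsub : (G.neighborSet v)ᶜ ⊆ {v} := by
      intro z hz
      by_contra hzz
      exact Set.eq_empty_iff_forall_notMem.mp hempty z ⟨hz, hzz⟩
    have := Set.ncard_le_ncard hsub (Set.toFinite _)
    rw [Set.ncard_singleton] at this
    omega
  refine disc (X := {v}) (Y := (G.neighborSet v)ᶜ \ {v}) ?_ ⟨v, rfl⟩ hY ?_ ?_ hconn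
  · rw [Set.union_diff_cancel' (by simp) (Set.singleton_subset_iff.mpr hvc)]
  · simp [Set.disjoint_left]
  · rintro a rfl b ⟨hb1, _⟩ hadj
    exact hb1 hadj

lemma nonadj4 (h5 : IsKConnected 5 G) (hcard : Fintype.card V ≤ 9) {v a b c d : V}
    (dab : a ≠ b) (dac : a ≠ c) (dad : a ≠ d) (dbc : b ≠ c) (dbd : b ≠ d) (dcd : c ≠ d)
    (dva : v ≠ a) (dvb : v ≠ b) (dvc : v ≠ c) (dvd : v ≠ d)
    (h1 : ¬G.Adj v a) (h2 : ¬G.Adj v b) (h3 : ¬G.Adj v c) (h4 : ¬G.Adj v d) : False := by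
  have hdeg := mindeg h5 v
  have hsub : G.neighborSet v ⊆ ({v, a, b, c, d} : Set V)ᶜ := by
    intro z hz
    simp only [Set.mem_compl_iff, Set.mem_insert_iff, Set.mem_singleton_iff]
    push_neg
    refine ⟨fun h => G.irrefl (h ▸ hz), fun h => h1 (h ▸ hz), fun h => h2 (h ▸ hz),
      fun h => h3 (h ▸ hz), fun h => h4 (h ▸ hz)⟩
  have h5set : ({v, a, b, c, d} : Set V).ncard = 5 := by
    rw [Set.ncard_insert_of_notMem (by simp [dva, dvb, dvc, dvd]),
      Set.ncard_insert_of_notMem (by simp [dab, dac, dad]),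
      Set.ncard_insert_of_notMem (by simp [dbc, dbd]),
      Set.ncard_insert_of_notMem (by simp [dcd]), Set.ncard_singleton]
  have hcompl := Set.ncard_add_ncard_compl ({v, a, b, c, d} : Set V)
  have h2' : Nat.card V = Fintype.card V := Nat.card_eq_fintype_card
  have := Set.ncard_le_ncard hsub (Set.toFinite _)
  omega

end Aux

section Aux2
variable [Fintype V] [DecidableEq V] {G : SimpleGraph V}

lemma goodness (h5 : IsKConnected 5 G) (hcard : Fintype.card V ≤ 9) {p1 p2 q1 q2 w : V}
    (d12 : p1 ≠ p2) (d13 : p1 ≠ q1) (d14 : p1 ≠ q2) (d23 : p2 ≠ q1) (d24 : p2 ≠ q2)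
    (d34 : q1 ≠ q2)
    (n11 : ¬G.Adj p1 q1) (n12 : ¬G.Adj p1 q2) (n21 : ¬G.Adj p2 q1) (n22 : ¬G.Adj p2 q2)
    (w1 : w ≠ p1) (w2 : w ≠ p2) (w3 : w ≠ q1) (w4 : w ≠ q2) :
    (G.Adj w p1 ∨ G.Adj w p2) ∧ (G.Adj w q1 ∨ G.Adj w q2) := by
  have hfive : ({p1, p2, q1, q2, w} : Set V).ncard = 5 := by
    rw [Set.ncard_insert_of_notMem (by simp [d12, d13, d14, Ne.symm w1]),
      Set.ncard_insert_of_notMem (by simp [d23, d24, Ne.symm w2]),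
      Set.ncard_insert_of_notMem (by simp [d34, Ne.symm w3]),
      Set.ncard_insert_of_notMem (by simp [Ne.symm w4]), Set.ncard_singleton]
  have hS : (({p1, p2, q1, q2, w} : Set V)ᶜ).ncard < 5 := by
    have hcompl := Set.ncard_add_ncard_compl ({p1, p2, q1, q2, w} : Set V)
    have h2' : Nat.card V = Fintype.card V := Nat.card_eq_fintype_card
    omega
  have hconn := h5.2 _ hS
  rw [compl_compl] at hconn
  constructor
  · by_contra hn
    push_neg at hn
    refine disc (G := G) (S := (({p1, p2, q1, q2, w} : Set V))ᶜ)
      (X := {p1, p2}) (Y := {q1, q2, w}) ?_ ⟨p1, by simp⟩ ⟨q1, by simp⟩ ?_ ?_ ?_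
    · rw [compl_compl]
      ext z; simp; tauto
    · rw [Set.disjoint_left]
      rintro z (rfl | rfl) hz <;> simp at hz <;> tauto
    · rintro a (rfl | rfl) b (rfl | rfl | rfl) hadj
      · exact n11 hadj
      · exact n12 hadj
      · exact hn.1 hadj.symm
      · exact n21 hadj
      · exact n22 hadj
      · exact hn.2 hadj.symm
    · rw [compl_compl]; exact hconn
  · by_contra hn
    push_neg at hn
    refine disc (G := G) (S := (({p1, p2, q1, q2, w} : Set V))ᶜ)
      (X := {q1, q2}) (Y := {p1, p2, w}) ?_ ⟨q1, by simp⟩ ⟨p1, by simp⟩ ?_ ?_ ?_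
    · rw [compl_compl]
      ext z; simp; tauto
    · rw [Set.disjoint_left]
      rintro z (rfl | rfl) hz <;> simp at hz <;> tauto
    · rintro a (rfl | rfl) b (rfl | rfl | rfl) hadj
      · exact n11 hadj.symm
      · exact n21 hadj.symm
      · exact hn.1 hadj.symm
      · exact n12 hadj.symm
      · exact n22 hadj.symm
      · exact hn.2 hadj.symm
    · rw [compl_compl]; exact hconn

lemma exists_edge (h5 : IsKConnected 5 G) : ∃ x y : V, G.Adj x y := by
  have hconn := h5.2 ∅ (by simp)
  have hcard : 2 ≤ Fintype.card V := by have := h5.1; omega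
  obtain ⟨u, w, huw⟩ := Fintype.exists_pair_of_one_lt_card (α := V) (by omega)
  have hu : u ∈ (∅ : Set V)ᶜ := Set.notMem_empty u
  have hw : w ∈ (∅ : Set V)ᶜ := Set.notMem_empty w
  obtain ⟨p⟩ := hconn.preconnected ⟨u, hu⟩ ⟨w, hw⟩
  cases p with
  | nil => exact absurd rfl huw
  | cons h _ =>
    rename_i c _
    exact ⟨u, c.1, h⟩

/-- Everything outside 5 distinct vertices (in a 9 element type) is one of 4 given others. -/
lemma four_eq (hcard : Fintype.card V = 9) {v1 v2 v3 v4 v5 w1 w2 w3 w4 : V}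
    (dv : v1 ≠ v2 ∧ v1 ≠ v3 ∧ v1 ≠ v4 ∧ v1 ≠ v5 ∧ v2 ≠ v3 ∧ v2 ≠ v4 ∧ v2 ≠ v5 ∧
      v3 ≠ v4 ∧ v3 ≠ v5 ∧ v4 ≠ v5)
    (dw : w1 ≠ w2 ∧ w1 ≠ w3 ∧ w1 ≠ w4 ∧ w2 ≠ w3 ∧ w2 ≠ w4 ∧ w3 ≠ w4)
    (hw1 : w1 ≠ v1 ∧ w1 ≠ v2 ∧ w1 ≠ v3 ∧ w1 ≠ v4 ∧ w1 ≠ v5)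
    (hw2 : w2 ≠ v1 ∧ w2 ≠ v2 ∧ w2 ≠ v3 ∧ w2 ≠ v4 ∧ w2 ≠ v5)
    (hw3 : w3 ≠ v1 ∧ w3 ≠ v2 ∧ w3 ≠ v3 ∧ w3 ≠ v4 ∧ w3 ≠ v5)
    (hw4 : w4 ≠ v1 ∧ w4 ≠ v2 ∧ w4 ≠ v3 ∧ w4 ≠ v4 ∧ w4 ≠ v5) :
    ∀ z : V, z ≠ v1 → z ≠ v2 → z ≠ v3 → z ≠ v4 → z ≠ v5 →
      z = w1 ∨ z = w2 ∨ z = w3 ∨ z = w4 := by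
  obtain ⟨d1, d2, d3, d4, d5, d6, d7, d8, d9, d10⟩ := dv
  obtain ⟨e1, e2, e3, e4, e5, e6⟩ := dw
  have hE : ({w1, w2, w3, w4} : Set V) ⊆ ({v1, v2, v3, v4, v5} : Set V)ᶜ := by
    rintro z (rfl | rfl | rfl | rfl) <;> simp_all
  have hcardE : ({w1, w2, w3, w4} : Set V).ncard = 4 := by
    rw [Set.ncard_insert_of_notMem (by simp [e1, e2, e3]),
      Set.ncard_insert_of_notMem (by simp [e4, e5]),
      Set.ncard_insert_of_notMem (by simp [e6]), Set.ncard_singleton]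
  have hcardV : ({v1, v2, v3, v4, v5} : Set V).ncard = 5 := by
    rw [Set.ncard_insert_of_notMem (by simp [d1, d2, d3, d4]),
      Set.ncard_insert_of_notMem (by simp [d5, d6, d7]),
      Set.ncard_insert_of_notMem (by simp [d8, d9]),
      Set.ncard_insert_of_notMem (by simp [d10]), Set.ncard_singleton]
  have hcardF : (({v1, v2, v3, v4, v5} : Set V)ᶜ).ncard = 4 := by
    have hcompl := Set.ncard_add_ncard_compl ({v1, v2, v3, v4, v5} : Set V)
    have h2' : Nat.card V = Fintype.card V := Nat.card_eq_fintype_card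
    omega
  have heq := Set.eq_of_subset_of_ncard_le hE (by omega) (Set.toFinite _)
  intro z z1 z2 z3 z4 z5
  have hz : z ∈ ({v1, v2, v3, v4, v5} : Set V)ᶜ := by simp [z1, z2, z3, z4, z5]
  rw [← heq] at hz
  simpa using hz

lemma five_eq (hcard : Fintype.card V = 9) {v1 v2 v3 v4 w1 w2 w3 w4 w5 : V}
    (dv : v1 ≠ v2 ∧ v1 ≠ v3 ∧ v1 ≠ v4 ∧ v2 ≠ v3 ∧ v2 ≠ v4 ∧ v3 ≠ v4)
    (dw : w1 ≠ w2 ∧ w1 ≠ w3 ∧ w1 ≠ w4 ∧ w1 ≠ w5 ∧ w2 ≠ w3 ∧ w2 ≠ w4 ∧ w2 ≠ w5 ∧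
      w3 ≠ w4 ∧ w3 ≠ w5 ∧ w4 ≠ w5)
    (hw1 : w1 ≠ v1 ∧ w1 ≠ v2 ∧ w1 ≠ v3 ∧ w1 ≠ v4)
    (hw2 : w2 ≠ v1 ∧ w2 ≠ v2 ∧ w2 ≠ v3 ∧ w2 ≠ v4)
    (hw3 : w3 ≠ v1 ∧ w3 ≠ v2 ∧ w3 ≠ v3 ∧ w3 ≠ v4)
    (hw4 : w4 ≠ v1 ∧ w4 ≠ v2 ∧ w4 ≠ v3 ∧ w4 ≠ v4)
    (hw5 : w5 ≠ v1 ∧ w5 ≠ v2 ∧ w5 ≠ v3 ∧ w5 ≠ v4) :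
    ∀ z : V, z ≠ v1 → z ≠ v2 → z ≠ v3 → z ≠ v4 →
      z = w1 ∨ z = w2 ∨ z = w3 ∨ z = w4 ∨ z = w5 := by
  obtain ⟨d1, d2, d3, d4, d5, d6⟩ := dv
  obtain ⟨e1, e2, e3, e4, e5, e6, e7, e8, e9, e10⟩ := dw
  have hE : ({w1, w2, w3, w4, w5} : Set V) ⊆ ({v1, v2, v3, v4} : Set V)ᶜ := by
    rintro z (rfl | rfl | rfl | rfl | rfl) <;> simp_all
  have hcardE : ({w1, w2, w3, w4, w5} : Set V).ncard = 5 := by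
    rw [Set.ncard_insert_of_notMem (by simp [e1, e2, e3, e4]),
      Set.ncard_insert_of_notMem (by simp [e5, e6, e7]),
      Set.ncard_insert_of_notMem (by simp [e8, e9]),
      Set.ncard_insert_of_notMem (by simp [e10]), Set.ncard_singleton]
  have hcardV : ({v1, v2, v3, v4} : Set V).ncard = 4 := by
    rw [Set.ncard_insert_of_notMem (by simp [d1, d2, d3]),
      Set.ncard_insert_of_notMem (by simp [d4, d5]),
      Set.ncard_insert_of_notMem (by simp [d6]), Set.ncard_singleton]
  have hcardF : (({v1, v2, v3, v4} : Set V)ᶜ).ncard = 5 := by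
    have hcompl := Set.ncard_add_ncard_compl ({v1, v2, v3, v4} : Set V)
    have h2' : Nat.card V = Fintype.card V := Nat.card_eq_fintype_card
    omega
  have heq := Set.eq_of_subset_of_ncard_le hE (by omega) (Set.toFinite _)
  intro z z1 z2 z3 z4
  have hz : z ∈ ({v1, v2, v3, v4} : Set V)ᶜ := by simp [z1, z2, z3, z4]
  rw [← heq] at hz
  simpa using hz

end Aux2

section STRsec
variable [Fintype V] [DecidableEq V] {G : SimpleGraph V}

lemma lift1 (h5 : IsKConnected 5 G) {u v : V} (huv : G.Adj u v)
    {S : Set {w : V // w ≠ v}} (hS : S.ncard < 4) :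
    ((contractE G u v).induce Sᶜ).Connected := by
  have hncard : ((Subtype.val '' S) ∪ {v} : Set V).ncard < 5 := by
    have h1 := Set.ncard_union_le (Subtype.val '' S) ({v} : Set V)
    have h2 : (Subtype.val '' S).ncard = S.ncard :=
      Set.ncard_image_of_injective _ Subtype.val_injective
    have h3 : ({v} : Set V).ncard = 1 := Set.ncard_singleton v
    omega
  have hconn := h5.2 _ hncard
  have hvmem : ∀ z : V, z ∈ ((Subtype.val '' S) ∪ {v} : Set V)ᶜ → z ≠ v := by
    intro z hz h
    exact hz (Set.mem_union_right _ (by simp [h]))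
  let F : (G.induce ((Subtype.val '' S) ∪ {v} : Set V)ᶜ) →g
      ((contractE G u v).induce Sᶜ) :=
    { toFun := fun a => ⟨⟨a.1, hvmem a.1 a.2⟩,
        fun hmem => a.2 (Set.mem_union_left _ ⟨⟨a.1, hvmem a.1 a.2⟩, hmem, rfl⟩)⟩,
      map_rel' := by
        intro a b hab
        have hadj : G.Adj a.1 b.1 := hab
        show (contractE G u v).Adj _ _
        rw [contractE, SimpleGraph.fromRel_adj]
        exact ⟨fun h => G.ne_of_adj hadj
            (congrArg (Subtype.val (p := fun w : V => w ≠ v)) h),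
          Or.inl (Or.inl hadj)⟩ }
  have hsurj : Function.Surjective F := by
    rintro ⟨⟨z, hzv⟩, hzS⟩
    refine ⟨⟨z, ?_⟩, ?_⟩
    · rintro (⟨s, hs, heq⟩ | hzv')
      · exact hzS (by rwa [show (⟨z, hzv⟩ : {w : V // w ≠ v}) = s from Subtype.ext heq.symm])
      · exact hzv (by simpa using hzv')
    · apply Subtype.ext
      apply Subtype.ext
      rfl
  exact SimpleGraph.Connected.map F hsurj hconn

lemma lift2 (h5 : IsKConnected 5 G) {u v : V} (huv : G.Adj u v)
    {T A B : Set {w : V // w ≠ v}} (hT : T.ncard = 4)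
    (hm : (⟨u, huv.ne⟩ : {w : V // w ≠ v}) ∈ A)
    (hAne : A.Nonempty) (hBne : B.Nonempty) (hdisj : Disjoint A B) (hun : A ∪ B = Tᶜ)
    (hAB : ∀ a ∈ A, ∀ b ∈ B, ¬(contractE G u v).Adj a b) : False := by
  have hncard : (Subtype.val '' T : Set V).ncard < 5 := by
    have h2 : (Subtype.val '' T).ncard = T.ncard :=
      Set.ncard_image_of_injective _ Subtype.val_injective
    omega
  have hconn := h5.2 _ hncard
  have hmemAB : ∀ a : {w : V // w ≠ v}, a ∈ A ∪ B → a ∉ T := by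
    intro a ha
    rw [hun] at ha
    exact ha
  refine disc (G := G) (S := (Subtype.val '' T : Set V))
    (X := (Subtype.val '' A) ∪ {v}) (Y := Subtype.val '' B) ?_
    ⟨v, Set.mem_union_right _ rfl⟩ (hBne.image _) ?_ ?_ hconn
  · ext z
    simp only [Set.mem_union, Set.mem_image, Set.mem_singleton_iff, Set.mem_compl_iff]
    constructor
    · rintro ((⟨a, ha, rfl⟩ | rfl) | ⟨b, hb, rfl⟩) ⟨t, ht, heq⟩
      · exact hmemAB a (Or.inl ha) (by rwa [show a = t from Subtype.ext heq.symm])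
      · exact t.2 heq
      · exact hmemAB b (Or.inr hb) (by rwa [show b = t from Subtype.ext heq.symm])
    · intro hnt
      by_cases hzv : z = v
      · exact Or.inl (Or.inr hzv)
      · have hzT : (⟨z, hzv⟩ : {w : V // w ≠ v}) ∈ Tᶜ := fun ht => hnt ⟨⟨z, hzv⟩, ht, rfl⟩
        rw [← hun] at hzT
        rcases hzT with h | h
        · exact Or.inl (Or.inl ⟨_, h, rfl⟩)
        · exact Or.inr ⟨_, h, rfl⟩
  · rw [Set.disjoint_left]
    rintro z (⟨a, ha, rfl⟩ | rfl) ⟨b, hb, heq⟩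
    · exact (hdisj.ne_of_mem ha hb) (Subtype.ext heq).symm
    · exact b.2 heq
  · rintro z (⟨a, ha, rfl⟩ | rfl) w ⟨b, hb, rfl⟩ hadj
    · refine hAB a ha b hb ?_
      rw [contractE, SimpleGraph.fromRel_adj]
      exact ⟨fun h => G.ne_of_adj hadj (congrArg Subtype.val h), Or.inl (Or.inl hadj)⟩
    · refine hAB _ hm b hb ?_
      rw [contractE, SimpleGraph.fromRel_adj]
      refine ⟨fun h => (hdisj.ne_of_mem hm hb) h, Or.inl (Or.inr (Or.inl ⟨rfl, hadj⟩))⟩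

lemma STR (h5 : IsKConnected 5 G) (hcc : ContractionCriticalQuasiFive G)
    (hcard : Fintype.card V ≤ 9) {u v : V} (huv : G.Adj u v) :
    Fintype.card V = 9 ∧ ∃ p1 p2 q1 q2 : V,
      (p1 ≠ p2 ∧ p1 ≠ q1 ∧ p1 ≠ q2 ∧ p2 ≠ q1 ∧ p2 ≠ q2 ∧ q1 ≠ q2) ∧
      (p1 ≠ u ∧ p1 ≠ v ∧ p2 ≠ u ∧ p2 ≠ v ∧ q1 ≠ u ∧ q1 ≠ v ∧ q2 ≠ u ∧ q2 ≠ v) ∧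
      (¬G.Adj p1 q1 ∧ ¬G.Adj p1 q2 ∧ ¬G.Adj p2 q1 ∧ ¬G.Adj p2 q2) := by
  have hcardsub : Fintype.card {w : V // w ≠ v} = Fintype.card V - 1 := by
    have h1 : Fintype.card {w : V // w = v} = 1 := Fintype.card_subtype_eq v
    have h2 := Fintype.card_subtype_compl (fun w : V => w = v)
    rw [h1] at h2
    exact h2
  have hc6 := h5.1
  have hnq := hcc.2 u v huv
  rw [QuasiFiveConnected, not_and_or] at hnq
  rcases hnq with hnk | hT
  · rw [IsKConnected, not_and_or] at hnk
    rcases hnk with hc | hns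
    · push_neg at hc
      omega
    · push_neg at hns
      obtain ⟨S, hS1, hS2⟩ := hns
      exact absurd (lift1 h5 huv hS1) hS2
  · push_neg at hT
    obtain ⟨T, hT4, A, B, hA2, hB2, hdisj, hun, hAB⟩ := hT
    by_cases hmT : (⟨u, huv.ne⟩ : {w : V // w ≠ v}) ∈ T
    · have hTc : T.ncard + Tᶜ.ncard = Fintype.card {w : V // w ≠ v} := by
        have := Set.ncard_add_ncard_compl T
        rwa [Nat.card_eq_fintype_card] at this
      have hsum : A.ncard + B.ncard = Tᶜ.ncard := by
        rw [← hun, Set.ncard_union_eq hdisj]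
      have h9 : Fintype.card V = 9 ∧ A.ncard = 2 ∧ B.ncard = 2 := by omega
      obtain ⟨α1, α2, hαne, hAeq⟩ := Set.ncard_eq_two.mp h9.2.1
      obtain ⟨β1, β2, hβne, hBeq⟩ := Set.ncard_eq_two.mp h9.2.2
      have hα1 : α1 ∈ A := by rw [hAeq]; exact Set.mem_insert _ _
      have hα2 : α2 ∈ A := by rw [hAeq]; exact Set.mem_insert_of_mem _ rfl
      have hβ1 : β1 ∈ B := by rw [hBeq]; exact Set.mem_insert _ _
      have hβ2 : β2 ∈ B := by rw [hBeq]; exact Set.mem_insert_of_mem _ rfl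
      have hnotu : ∀ a : {w : V // w ≠ v}, a ∈ A ∪ B → a.1 ≠ u := by
        intro a ha h
        have : a ∈ Tᶜ := hun ▸ ha
        exact this (by rwa [show a = (⟨u, huv.ne⟩ : {w : V // w ≠ v}) from Subtype.ext h])
      have hnadj : ∀ a : {w : V // w ≠ v}, a ∈ A → ∀ b : {w : V // w ≠ v}, b ∈ B →
          ¬G.Adj a.1 b.1 := by
        intro a ha b hb hadj
        refine hAB a ha b hb ?_
        rw [contractE, SimpleGraph.fromRel_adj]
        exact ⟨fun h => hdisj.ne_of_mem ha hb h, Or.inl (Or.inl hadj)⟩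
      refine ⟨h9.1, α1.1, α2.1, β1.1, β2.1,
        ⟨fun h => hαne (Subtype.ext h),
         fun h => hdisj.ne_of_mem hα1 hβ1 (Subtype.ext h),
         fun h => hdisj.ne_of_mem hα1 hβ2 (Subtype.ext h),
         fun h => hdisj.ne_of_mem hα2 hβ1 (Subtype.ext h),
         fun h => hdisj.ne_of_mem hα2 hβ2 (Subtype.ext h),
         fun h => hβne (Subtype.ext h)⟩,
        ⟨hnotu α1 (Or.inl hα1), α1.2, hnotu α2 (Or.inl hα2), α2.2,
         hnotu β1 (Or.inr hβ1), β1.2, hnotu β2 (Or.inr hβ2), β2.2⟩,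
        hnadj α1 hα1 β1 hβ1, hnadj α1 hα1 β2 hβ2,
        hnadj α2 hα2 β1 hβ1, hnadj α2 hα2 β2 hβ2⟩
    · have hAne : A.Nonempty := Set.nonempty_of_ncard_ne_zero (by omega)
      have hBne : B.Nonempty := Set.nonempty_of_ncard_ne_zero (by omega)
      have hmAB : (⟨u, huv.ne⟩ : {w : V // w ≠ v}) ∈ A ∪ B := by rw [hun]; exact hmT
      rcases hmAB with hmA | hmB
      · exact (lift2 h5 huv hT4 hmA hAne hBne hdisj hun hAB).elim
      · exact (lift2 h5 huv hT4 hmB hBne hAne hdisj.symm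
          (by rw [Set.union_comm]; exact hun)
          (fun b hb a ha hadj => hAB a ha b hb hadj.symm)).elim

end STRsec

section PLsec
variable [Fintype V] [DecidableEq V] {G : SimpleGraph V}

/-- Core of the partner lemma. The removed vertex of the good quad `(a1 a2 | b1 b2)` is `a1`;
`t` is the extra vertex; the second quad has `t`-part `{t, u}` and opposite part `{o1, o2}`. -/
lemma PLcore (h5 : IsKConnected 5 G) (hcard : Fintype.card V ≤ 9) {a1 a2 b1 b2 t : V}
    (d12 : a1 ≠ a2) (d13 : a1 ≠ b1) (d14 : a1 ≠ b2) (d23 : a2 ≠ b1) (d24 : a2 ≠ b2)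
    (d34 : b1 ≠ b2)
    (dt1 : t ≠ a1) (dt2 : t ≠ a2) (dt3 : t ≠ b1) (dt4 : t ≠ b2)
    (n1 : ¬G.Adj a1 b1) (n2 : ¬G.Adj a1 b2) (n3 : ¬G.Adj a2 b1) (n4 : ¬G.Adj a2 b2)
    {u o1 o2 : V}
    (hu : u = a2 ∨ u = b1 ∨ u = b2 ∨ u = t) (hut : u ≠ t)
    (ho1 : o1 = a2 ∨ o1 = b1 ∨ o1 = b2 ∨ o1 = t) (ho1t : o1 ≠ t)
    (ho2 : o2 = a2 ∨ o2 = b1 ∨ o2 = b2 ∨ o2 = t) (ho2t : o2 ≠ t)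
    (duo1 : u ≠ o1) (duo2 : u ≠ o2) (do12 : o1 ≠ o2)
    (c1 : ¬G.Adj t o1) (c2 : ¬G.Adj t o2) (c3 : ¬G.Adj u o1) (c4 : ¬G.Adj u o2) : False := by
  have hgood := goodness h5 hcard d12 d13 d14 d23 d24 d34 n1 n2 n3 n4
    dt1 dt2 dt3 dt4
  rcases hu with rfl | rfl | rfl | rfl
  · -- u plays a2 : opposite pair is {b1, b2}
    have hob : (o1 = b1 ∧ o2 = b2) ∨ (o1 = b2 ∧ o2 = b1) := by
      rcases ho1 with rfl | rfl | rfl | h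
      · exact absurd rfl duo1
      · rcases ho2 with rfl | rfl | rfl | h
        · exact absurd rfl duo2
        · exact absurd rfl do12
        · exact Or.inl ⟨rfl, rfl⟩
        · exact absurd h ho2t
      · rcases ho2 with rfl | rfl | rfl | h
        · exact absurd rfl duo2
        · exact Or.inr ⟨rfl, rfl⟩
        · exact absurd rfl do12
        · exact absurd h ho2t
      · exact absurd h ho1t
    rcases hob with ⟨rfl, rfl⟩ | ⟨rfl, rfl⟩
    · rcases hgood.2 with h | h
      · exact c1 h
      · exact c2 h
    · rcases hgood.2 with h | h
      · exact c2 h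
      · exact c1 h
  · -- u plays b1 : opposite pair is {a2, b2}; contradiction at b2
    have hob : (o1 = a2 ∧ o2 = b2) ∨ (o1 = b2 ∧ o2 = a2) := by
      rcases ho1 with rfl | rfl | rfl | h
      · rcases ho2 with rfl | rfl | rfl | h
        · exact absurd rfl do12
        · exact absurd rfl duo2
        · exact Or.inl ⟨rfl, rfl⟩
        · exact absurd h ho2t
      · exact absurd rfl duo1
      · rcases ho2 with rfl | rfl | rfl | h
        · exact Or.inr ⟨rfl, rfl⟩
        · exact absurd rfl duo2
        · exact absurd rfl do12
        · exact absurd h ho2t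
      · exact absurd h ho1t
    rcases hob with ⟨rfl, rfl⟩ | ⟨rfl, rfl⟩
    · -- a2 = o1, b2 = o2, pivot o2
      exact nonadj4 h5 hcard d12 d13 dt1.symm d23 dt2.symm hut
        d14.symm d24.symm d34.symm dt4.symm
        (fun h => n2 h.symm) (fun h => n4 h.symm) (fun h => c4 h.symm) (fun h => c2 h.symm)
    · -- b2 = o1, a2 = o2, pivot o1
      exact nonadj4 h5 hcard d12 d13 dt1.symm d23 dt2.symm hut
        d14.symm d24.symm d34.symm dt4.symm
        (fun h => n2 h.symm) (fun h => n4 h.symm) (fun h => c3 h.symm) (fun h => c1 h.symm)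
  · -- u plays b2 : opposite pair is {a2, b1}; contradiction at b1
    have hob : (o1 = a2 ∧ o2 = b1) ∨ (o1 = b1 ∧ o2 = a2) := by
      rcases ho1 with rfl | rfl | rfl | h
      · rcases ho2 with rfl | rfl | rfl | h
        · exact absurd rfl do12
        · exact Or.inl ⟨rfl, rfl⟩
        · exact absurd rfl duo2
        · exact absurd h ho2t
      · rcases ho2 with rfl | rfl | rfl | h
        · exact Or.inr ⟨rfl, rfl⟩
        · exact absurd rfl do12
        · exact absurd rfl duo2
        · exact absurd h ho2t
      · exact absurd rfl duo1
      · exact absurd h ho1t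
    rcases hob with ⟨rfl, rfl⟩ | ⟨rfl, rfl⟩
    · -- a2 = o1, b1 = o2, pivot o2
      exact nonadj4 h5 hcard d12 d14 dt1.symm d24 dt2.symm hut
        d13.symm d23.symm d34 dt3.symm
        (fun h => n1 h.symm) (fun h => n3 h.symm) (fun h => c4 h.symm) (fun h => c2 h.symm)
    · -- b1 = o1, a2 = o2, pivot o1
      exact nonadj4 h5 hcard d12 d14 dt1.symm d24 dt2.symm hut
        d13.symm d23.symm d34 dt3.symm
        (fun h => n1 h.symm) (fun h => n3 h.symm) (fun h => c3 h.symm) (fun h => c1 h.symm)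
  · exact absurd rfl hut

/-- The partner lemma : given a "good quad" `(a1 a2 | b1 b2)` (cross pairs nonadjacent),
a vertex `t` outside it, and a second cross-nonadjacent quad `(c1 c2 | d1 d2)` whose four
distinct vertices all lie in `{a2, b1, b2, t}`, we get a contradiction. -/
lemma PL (h5 : IsKConnected 5 G) (hcard : Fintype.card V ≤ 9) {a1 a2 b1 b2 t : V}
    (d12 : a1 ≠ a2) (d13 : a1 ≠ b1) (d14 : a1 ≠ b2) (d23 : a2 ≠ b1) (d24 : a2 ≠ b2)
    (d34 : b1 ≠ b2)
    (dt1 : t ≠ a1) (dt2 : t ≠ a2) (dt3 : t ≠ b1) (dt4 : t ≠ b2)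
    (n1 : ¬G.Adj a1 b1) (n2 : ¬G.Adj a1 b2) (n3 : ¬G.Adj a2 b1) (n4 : ¬G.Adj a2 b2)
    {c1 c2 d1 d2 : V}
    (e12 : c1 ≠ c2) (e13 : c1 ≠ d1) (e14 : c1 ≠ d2) (e23 : c2 ≠ d1) (e24 : c2 ≠ d2)
    (e34 : d1 ≠ d2)
    (hm1 : c1 = a2 ∨ c1 = b1 ∨ c1 = b2 ∨ c1 = t)
    (hm2 : c2 = a2 ∨ c2 = b1 ∨ c2 = b2 ∨ c2 = t)
    (hm3 : d1 = a2 ∨ d1 = b1 ∨ d1 = b2 ∨ d1 = t)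
    (hm4 : d2 = a2 ∨ d2 = b1 ∨ d2 = b2 ∨ d2 = t)
    (x1 : ¬G.Adj c1 d1) (x2 : ¬G.Adj c1 d2) (x3 : ¬G.Adj c2 d1) (x4 : ¬G.Adj c2 d2) :
    False := by
  by_cases h1 : c1 = t
  · subst h1
    exact PLcore h5 hcard d12 d13 d14 d23 d24 d34 dt1 dt2 dt3 dt4 n1 n2 n3 n4
      hm2 e12.symm hm3 e13.symm hm4 e14.symm e23 e24 e34 x1 x2 x3 x4
  by_cases h2 : c2 = t
  · subst h2
    exact PLcore h5 hcard d12 d13 d14 d23 d24 d34 dt1 dt2 dt3 dt4 n1 n2 n3 n4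
      hm1 h1 hm3 e23.symm hm4 e24.symm e13 e14 e34 x3 x4 x1 x2
  by_cases h3 : d1 = t
  · subst h3
    exact PLcore h5 hcard d12 d13 d14 d23 d24 d34 dt1 dt2 dt3 dt4 n1 n2 n3 n4
      hm4 e34.symm hm1 h1 hm2 h2 e14.symm e24.symm e12
      (fun h => x1 h.symm) (fun h => x3 h.symm) (fun h => x2 h.symm) (fun h => x4 h.symm)
  by_cases h4 : d2 = t
  · subst h4
    exact PLcore h5 hcard d12 d13 d14 d23 d24 d34 dt1 dt2 dt3 dt4 n1 n2 n3 n4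
      hm3 h3 hm1 h1 hm2 h2 e13.symm e23.symm e12
      (fun h => x2 h.symm) (fun h => x4 h.symm) (fun h => x1 h.symm) (fun h => x3 h.symm)
  -- none equals t : four distinct values among three
  rcases hm1 with rfl | rfl | rfl | hh <;>
    rcases hm2 with rfl | rfl | rfl | hh2 <;>
      rcases hm3 with rfl | rfl | rfl | hh3 <;>
        rcases hm4 with rfl | rfl | rfl | hh4 <;>
          simp_all

end PLsec

section SLsec
variable [Fintype V] [DecidableEq V] {G : SimpleGraph V}

/-- Helper for SL: the case where `q1` lies in the quad, with partner `e2` and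
opposite part `{f1, f2}`. -/
lemma SLq (h5 : IsKConnected 5 G) (hcard : Fintype.card V ≤ 9) {p1 p2 q1 q2 t e2 f1 f2 : V}
    (d12 : p1 ≠ p2) (d13 : p1 ≠ q1) (d23 : p2 ≠ q1)
    (n11 : ¬G.Adj p1 q1) (n12 : ¬G.Adj p1 q2) (n21 : ¬G.Adj p2 q1)
    (dq1 : q1 ≠ e2) (dq2 : q1 ≠ f1) (dq3 : q1 ≠ f2) (dq4 : e2 ≠ f1) (dq5 : e2 ≠ f2)
    (dq6 : f1 ≠ f2)
    (av2 : e2 ≠ p1 ∧ e2 ≠ t) (av3 : f1 ≠ p1 ∧ f1 ≠ t) (av4 : f2 ≠ p1 ∧ f2 ≠ t)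
    (cx1 : ¬G.Adj q1 f1) (cx2 : ¬G.Adj q1 f2) (cx3 : ¬G.Adj e2 f1) (cx4 : ¬G.Adj e2 f2) :
    ∃ c, ¬G.Adj p2 c ∧ G.Adj p1 c ∧ c ≠ p1 ∧ c ≠ p2 ∧ c ≠ q1 ∧ c ≠ q2 ∧ c ≠ t := by
  have hg := goodness h5 hcard dq1 dq2 dq3 dq4 dq5 dq6 cx1 cx2 cx3 cx4
    d13 av2.1.symm av3.1.symm av4.1.symm
  have hpe2 : G.Adj p1 e2 := hg.1.resolve_left n11
  by_cases hpf1 : p2 = f1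
  · refine ⟨e2, ?_, hpe2, av2.1, ?_, dq1.symm, ?_, av2.2⟩
    · intro h
      rw [hpf1] at h
      exact cx3 h.symm
    · intro h
      exact dq4 (h.trans hpf1)
    · intro h
      exact n12 (h ▸ hpe2)
  by_cases hpf2 : p2 = f2
  · refine ⟨e2, ?_, hpe2, av2.1, ?_, dq1.symm, ?_, av2.2⟩
    · intro h
      rw [hpf2] at h
      exact cx4 h.symm
    · intro h
      exact dq5 (h.trans hpf2)
    · intro h
      exact n12 (h ▸ hpe2)
  exact (nonadj4 h5 hcard d12 av3.1.symm av4.1.symm hpf1 hpf2 dq6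
    d13.symm d23.symm dq2 dq3
    (fun h => n11 h.symm) (fun h => n21 h.symm) cx1 cx2).elim

lemma SL (h5 : IsKConnected 5 G) (hcc : ContractionCriticalQuasiFive G)
    (hcard : Fintype.card V ≤ 9) {p1 p2 q1 q2 t : V}
    (d12 : p1 ≠ p2) (d13 : p1 ≠ q1) (d14 : p1 ≠ q2) (d23 : p2 ≠ q1) (d24 : p2 ≠ q2)
    (d34 : q1 ≠ q2)
    (n11 : ¬G.Adj p1 q1) (n12 : ¬G.Adj p1 q2) (n21 : ¬G.Adj p2 q1) (n22 : ¬G.Adj p2 q2)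
    (hadj : G.Adj p1 t) :
    (∃ c, ¬G.Adj p2 c ∧ G.Adj p1 c ∧ c ≠ p1 ∧ c ≠ p2 ∧ c ≠ q1 ∧ c ≠ q2 ∧ c ≠ t) ∨
    (∃ e1 e2 f1 f2 : V,
      (e1 ≠ e2 ∧ e1 ≠ f1 ∧ e1 ≠ f2 ∧ e2 ≠ f1 ∧ e2 ≠ f2 ∧ f1 ≠ f2) ∧
      ((e1 ≠ p1 ∧ e1 ≠ p2 ∧ e1 ≠ q1 ∧ e1 ≠ q2 ∧ e1 ≠ t) ∧
       (e2 ≠ p1 ∧ e2 ≠ p2 ∧ e2 ≠ q1 ∧ e2 ≠ q2 ∧ e2 ≠ t) ∧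
       (f1 ≠ p1 ∧ f1 ≠ p2 ∧ f1 ≠ q1 ∧ f1 ≠ q2 ∧ f1 ≠ t) ∧
       (f2 ≠ p1 ∧ f2 ≠ p2 ∧ f2 ≠ q1 ∧ f2 ≠ q2 ∧ f2 ≠ t)) ∧
      (¬G.Adj e1 f1 ∧ ¬G.Adj e1 f2 ∧ ¬G.Adj e2 f1 ∧ ¬G.Adj e2 f2)) := by
  obtain ⟨h9, e1, e2, f1, f2, ⟨de12, de13, de14, de23, de24, de34⟩,
    ⟨he1u, he1v, he2u, he2v, hf1u, hf1v, hf2u, hf2v⟩,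
    cx11, cx12, cx21, cx22⟩ := STR h5 hcc hcard hadj
  by_cases hq1m : q1 = e1 ∨ q1 = e2 ∨ q1 = f1 ∨ q1 = f2
  · left
    rcases hq1m with h | h | h | h
    · rw [← h] at de12 de13 de14 cx11 cx12
      exact SLq h5 hcard d12 d13 d23 n11 n12 n21 de12 de13 de14 de23 de24 de34
        ⟨he2u, he2v⟩ ⟨hf1u, hf1v⟩ ⟨hf2u, hf2v⟩ cx11 cx12 cx21 cx22
    · rw [← h] at de12 de23 de24 cx21 cx22
      exact SLq h5 hcard d12 d13 d23 n11 n12 n21 de12.symm de23 de24 de13 de14 de34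
        ⟨he1u, he1v⟩ ⟨hf1u, hf1v⟩ ⟨hf2u, hf2v⟩ cx21 cx22 cx11 cx12
    · rw [← h] at de13 de23 de34 cx11 cx21
      exact SLq h5 hcard d12 d13 d23 n11 n12 n21 de34 de13.symm de23.symm
        de14.symm de24.symm de12 ⟨hf2u, hf2v⟩ ⟨he1u, he1v⟩ ⟨he2u, he2v⟩
        (fun h' => cx11 h'.symm) (fun h' => cx21 h'.symm)
        (fun h' => cx12 h'.symm) (fun h' => cx22 h'.symm)
    · rw [← h] at de14 de24 de34 cx12 cx22
      exact SLq h5 hcard d12 d13 d23 n11 n12 n21 de34.symm de14.symm de24.symm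
        de13.symm de23.symm de12 ⟨hf1u, hf1v⟩ ⟨he1u, he1v⟩ ⟨he2u, he2v⟩
        (fun h' => cx12 h'.symm) (fun h' => cx22 h'.symm)
        (fun h' => cx11 h'.symm) (fun h' => cx21 h'.symm)
  by_cases hq2m : q2 = e1 ∨ q2 = e2 ∨ q2 = f1 ∨ q2 = f2
  · left
    have res : ∃ c, ¬G.Adj p2 c ∧ G.Adj p1 c ∧ c ≠ p1 ∧ c ≠ p2 ∧ c ≠ q2 ∧ c ≠ q1 ∧
        c ≠ t := by
      rcases hq2m with h | h | h | h
      · rw [← h] at de12 de13 de14 cx11 cx12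
        exact SLq h5 hcard d12 d14 d24 n12 n11 n22 de12 de13 de14 de23 de24 de34
          ⟨he2u, he2v⟩ ⟨hf1u, hf1v⟩ ⟨hf2u, hf2v⟩ cx11 cx12 cx21 cx22
      · rw [← h] at de12 de23 de24 cx21 cx22
        exact SLq h5 hcard d12 d14 d24 n12 n11 n22 de12.symm de23 de24 de13 de14 de34
          ⟨he1u, he1v⟩ ⟨hf1u, hf1v⟩ ⟨hf2u, hf2v⟩ cx21 cx22 cx11 cx12
      · rw [← h] at de13 de23 de34 cx11 cx21
        exact SLq h5 hcard d12 d14 d24 n12 n11 n22 de34 de13.symm de23.symm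
          de14.symm de24.symm de12 ⟨hf2u, hf2v⟩ ⟨he1u, he1v⟩ ⟨he2u, he2v⟩
          (fun h' => cx11 h'.symm) (fun h' => cx21 h'.symm)
          (fun h' => cx12 h'.symm) (fun h' => cx22 h'.symm)
      · rw [← h] at de14 de24 de34 cx12 cx22
        exact SLq h5 hcard d12 d14 d24 n12 n11 n22 de34.symm de14.symm de24.symm
          de13.symm de23.symm de12 ⟨hf1u, hf1v⟩ ⟨he1u, he1v⟩ ⟨he2u, he2v⟩
          (fun h' => cx12 h'.symm) (fun h' => cx22 h'.symm)
          (fun h' => cx11 h'.symm) (fun h' => cx21 h'.symm)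
    obtain ⟨c, hc1, hc2, hc3, hc4, hc5, hc6, hc7⟩ := res
    exact ⟨c, hc1, hc2, hc3, hc4, hc6, hc5, hc7⟩
  push_neg at hq1m hq2m
  obtain ⟨hq1e1, hq1e2, hq1f1, hq1f2⟩ := hq1m
  obtain ⟨hq2e1, hq2e2, hq2f1, hq2f2⟩ := hq2m
  by_cases hp2m : p2 = e1 ∨ p2 = e2 ∨ p2 = f1 ∨ p2 = f2
  · exfalso
    rcases hp2m with h | h | h | h
    · rw [← h] at de13 de14 cx11 cx12
      exact nonadj4 h5 hcard d34 hq1f1 hq1f2 hq2f1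
        hq2f2 de34 d23 d24 de13 de14 n21 n22 cx11 cx12
    · rw [← h] at de23 de24 cx21 cx22
      exact nonadj4 h5 hcard d34 hq1f1 hq1f2 hq2f1
        hq2f2 de34 d23 d24 de23 de24 n21 n22 cx21 cx22
    · rw [← h] at de13 de23 cx11 cx21
      exact nonadj4 h5 hcard d34 hq1e1 hq1e2 hq2e1
        hq2e2 de12 d23 d24 de13.symm de23.symm n21 n22
        (fun h' => cx11 h'.symm) (fun h' => cx21 h'.symm)
    · rw [← h] at de14 de24 cx12 cx22
      exact nonadj4 h5 hcard d34 hq1e1 hq1e2 hq2e1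
        hq2e2 de12 d23 d24 de14.symm de24.symm n21 n22
        (fun h' => cx12 h'.symm) (fun h' => cx22 h'.symm)
  push_neg at hp2m
  obtain ⟨hp2e1, hp2e2, hp2f1, hp2f2⟩ := hp2m
  right
  exact ⟨e1, e2, f1, f2, ⟨de12, de13, de14, de23, de24, de34⟩,
    ⟨⟨he1u, Ne.symm hp2e1, Ne.symm hq1e1, Ne.symm hq2e1, he1v⟩,
     ⟨he2u, Ne.symm hp2e2, Ne.symm hq1e2, Ne.symm hq2e2, he2v⟩,
     ⟨hf1u, Ne.symm hp2f1, Ne.symm hq1f1, Ne.symm hq2f1, hf1v⟩,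
     ⟨hf2u, Ne.symm hp2f2, Ne.symm hq1f2, Ne.symm hq2f2, hf2v⟩⟩,
    cx11, cx12, cx21, cx22⟩

end SLsec

section GBsec
variable [Fintype V] [DecidableEq V] {G : SimpleGraph V}

lemma getBeta (h5 : IsKConnected 5 G) (hcc : ContractionCriticalQuasiFive G)
    (h9 : Fintype.card V = 9) {p1 p2 q1 q2 a1 a2 b1 b2 s5 : V}
    (d12 : p1 ≠ p2) (d13 : p1 ≠ q1) (d14 : p1 ≠ q2) (d23 : p2 ≠ q1) (d24 : p2 ≠ q2)
    (d34 : q1 ≠ q2)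
    (n11 : ¬G.Adj p1 q1) (n12 : ¬G.Adj p1 q2) (n21 : ¬G.Adj p2 q1) (n22 : ¬G.Adj p2 q2)
    (da1 : a1 ≠ a2) (da2 : a1 ≠ b1) (da3 : a1 ≠ b2) (da4 : a2 ≠ b1) (da5 : a2 ≠ b2)
    (da6 : b1 ≠ b2)
    (ma1 : a1 ≠ p1 ∧ a1 ≠ p2 ∧ a1 ≠ q1 ∧ a1 ≠ q2)
    (ma2 : a2 ≠ p1 ∧ a2 ≠ p2 ∧ a2 ≠ q1 ∧ a2 ≠ q2)
    (mb1 : b1 ≠ p1 ∧ b1 ≠ p2 ∧ b1 ≠ q1 ∧ b1 ≠ q2)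
    (mb2 : b2 ≠ p1 ∧ b2 ≠ p2 ∧ b2 ≠ q1 ∧ b2 ≠ q2)
    (ca1 : ¬G.Adj a1 b1) (ca2 : ¬G.Adj a1 b2) (ca3 : ¬G.Adj a2 b1) (ca4 : ¬G.Adj a2 b2)
    (ms1 : s5 ≠ p1) (ms2 : s5 ≠ p2) (ms3 : s5 ≠ q1) (ms4 : s5 ≠ q2)
    (ms5 : s5 ≠ a1) (ms6 : s5 ≠ a2) (ms7 : s5 ≠ b1) (ms8 : s5 ≠ b2)
    (huniq : ∀ z : V, z ≠ p1 → z ≠ p2 → z ≠ q1 → z ≠ q2 →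
      z = a1 ∨ z = a2 ∨ z = b1 ∨ z = b2 ∨ z = s5) :
    ¬G.Adj p2 s5 ∧ G.Adj p1 s5 := by
  have hcard : Fintype.card V ≤ 9 := le_of_eq h9
  have noQuad : ∀ s c1 c2 d1 d2 : V, (s = a1 ∨ s = a2 ∨ s = b1 ∨ s = b2) →
      (c1 ≠ c2 ∧ c1 ≠ d1 ∧ c1 ≠ d2 ∧ c2 ≠ d1 ∧ c2 ≠ d2 ∧ d1 ≠ d2) →
      ((c1 ≠ p1 ∧ c1 ≠ p2 ∧ c1 ≠ q1 ∧ c1 ≠ q2 ∧ c1 ≠ s) ∧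
       (c2 ≠ p1 ∧ c2 ≠ p2 ∧ c2 ≠ q1 ∧ c2 ≠ q2 ∧ c2 ≠ s) ∧
       (d1 ≠ p1 ∧ d1 ≠ p2 ∧ d1 ≠ q1 ∧ d1 ≠ q2 ∧ d1 ≠ s) ∧
       (d2 ≠ p1 ∧ d2 ≠ p2 ∧ d2 ≠ q1 ∧ d2 ≠ q2 ∧ d2 ≠ s)) →
      (¬G.Adj c1 d1 ∧ ¬G.Adj c1 d2 ∧ ¬G.Adj c2 d1 ∧ ¬G.Adj c2 d2) → False := by
    rintro s c1 c2 d1 d2 hsm ⟨e12, e13, e14, e23, e24, e34⟩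
      ⟨⟨u11, u12, u13, u14, u15⟩, ⟨u21, u22, u23, u24, u25⟩, ⟨u31, u32, u33, u34, u35⟩,
        ⟨u41, u42, u43, u44, u45⟩⟩ ⟨x1, x2, x3, x4⟩
    rcases hsm with rfl | rfl | rfl | rfl
    · -- s plays a1
      have hmem := four_eq h9
        ⟨d12, d13, d14, ma1.1.symm, d23, d24, ma1.2.1.symm, d34, ma1.2.2.1.symm,
          ma1.2.2.2.symm⟩
        ⟨da4, da5, ms6.symm, da6, ms7.symm, ms8.symm⟩
        ⟨ma2.1, ma2.2.1, ma2.2.2.1, ma2.2.2.2, da1.symm⟩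
        ⟨mb1.1, mb1.2.1, mb1.2.2.1, mb1.2.2.2, da2.symm⟩
        ⟨mb2.1, mb2.2.1, mb2.2.2.1, mb2.2.2.2, da3.symm⟩
        ⟨ms1, ms2, ms3, ms4, ms5⟩
      exact PL h5 hcard da1 da2 da3 da4 da5 da6 ms5 ms6 ms7 ms8
        ca1 ca2 ca3 ca4 e12 e13 e14 e23 e24 e34
        (hmem c1 u11 u12 u13 u14 u15) (hmem c2 u21 u22 u23 u24 u25)
        (hmem d1 u31 u32 u33 u34 u35) (hmem d2 u41 u42 u43 u44 u45) x1 x2 x3 x4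
    · -- s plays a2
      have hmem := four_eq h9
        ⟨d12, d13, d14, ma2.1.symm, d23, d24, ma2.2.1.symm, d34, ma2.2.2.1.symm,
          ma2.2.2.2.symm⟩
        ⟨da2, da3, ms5.symm, da6, ms7.symm, ms8.symm⟩
        ⟨ma1.1, ma1.2.1, ma1.2.2.1, ma1.2.2.2, da1⟩
        ⟨mb1.1, mb1.2.1, mb1.2.2.1, mb1.2.2.2, da4.symm⟩
        ⟨mb2.1, mb2.2.1, mb2.2.2.1, mb2.2.2.2, da5.symm⟩
        ⟨ms1, ms2, ms3, ms4, ms6⟩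
      exact PL h5 hcard da1.symm da4 da5 da2 da3 da6 ms6 ms5 ms7 ms8
        ca3 ca4 ca1 ca2 e12 e13 e14 e23 e24 e34
        (hmem c1 u11 u12 u13 u14 u15) (hmem c2 u21 u22 u23 u24 u25)
        (hmem d1 u31 u32 u33 u34 u35) (hmem d2 u41 u42 u43 u44 u45) x1 x2 x3 x4
    · -- s plays b1
      have hmem := four_eq h9
        ⟨d12, d13, d14, mb1.1.symm, d23, d24, mb1.2.1.symm, d34, mb1.2.2.1.symm,
          mb1.2.2.2.symm⟩
        ⟨da3.symm, da5.symm, ms8.symm, da1, ms5.symm, ms6.symm⟩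
        ⟨mb2.1, mb2.2.1, mb2.2.2.1, mb2.2.2.2, da6.symm⟩
        ⟨ma1.1, ma1.2.1, ma1.2.2.1, ma1.2.2.2, da2⟩
        ⟨ma2.1, ma2.2.1, ma2.2.2.1, ma2.2.2.2, da4⟩
        ⟨ms1, ms2, ms3, ms4, ms7⟩
      exact PL h5 hcard da6 da2.symm da4.symm da3.symm da5.symm da1 ms7 ms8 ms5 ms6
        (fun h => ca1 h.symm) (fun h => ca3 h.symm) (fun h => ca2 h.symm)
        (fun h => ca4 h.symm) e12 e13 e14 e23 e24 e34
        (hmem c1 u11 u12 u13 u14 u15) (hmem c2 u21 u22 u23 u24 u25)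
        (hmem d1 u31 u32 u33 u34 u35) (hmem d2 u41 u42 u43 u44 u45) x1 x2 x3 x4
    · -- s plays b2
      have hmem := four_eq h9
        ⟨d12, d13, d14, mb2.1.symm, d23, d24, mb2.2.1.symm, d34, mb2.2.2.1.symm,
          mb2.2.2.2.symm⟩
        ⟨da2.symm, da4.symm, ms7.symm, da1, ms5.symm, ms6.symm⟩
        ⟨mb1.1, mb1.2.1, mb1.2.2.1, mb1.2.2.2, da6⟩
        ⟨ma1.1, ma1.2.1, ma1.2.2.1, ma1.2.2.2, da3⟩
        ⟨ma2.1, ma2.2.1, ma2.2.2.1, ma2.2.2.2, da5⟩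
        ⟨ms1, ms2, ms3, ms4, ms8⟩
      exact PL h5 hcard da6.symm da3.symm da5.symm da2.symm da4.symm da1 ms8 ms7 ms5 ms6
        (fun h => ca2 h.symm) (fun h => ca4 h.symm) (fun h => ca1 h.symm)
        (fun h => ca3 h.symm) e12 e13 e14 e23 e24 e34
        (hmem c1 u11 u12 u13 u14 u15) (hmem c2 u21 u22 u23 u24 u25)
        (hmem d1 u31 u32 u33 u34 u35) (hmem d2 u41 u42 u43 u44 u45) x1 x2 x3 x4
  have hs : ∃ s, (s = a1 ∨ s = a2) ∧ G.Adj p1 s := by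
    by_cases h : G.Adj p1 a1
    · exact ⟨a1, Or.inl rfl, h⟩
    by_cases h' : G.Adj p1 a2
    · exact ⟨a2, Or.inr rfl, h'⟩
    exact (nonadj4 h5 hcard d34 ma1.2.2.1.symm ma2.2.2.1.symm ma1.2.2.2.symm
      ma2.2.2.2.symm da1 d13 d14 ma1.1.symm ma2.1.symm n11 n12 h h').elim
  obtain ⟨s, hsm, hps⟩ := hs
  have hSL1 := SL h5 hcc hcard d12 d13 d14 d23 d24 d34 n11 n12 n21 n22 hps
  rcases hSL1 with ⟨β, hb1, hb2, hb3, hb4, hb5, hb6, hb7⟩ |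
    ⟨c1, c2, d1, d2, hdist, hav, hcx⟩
  · have hSL2 := SL h5 hcc hcard d12 d13 d14 d23 d24 d34 n11 n12 n21 n22 hb2
    rcases hSL2 with ⟨c, hc1, hc2, hc3, hc4, hc5, hc6, hc7⟩ |
      ⟨c1, c2, d1, d2, hdist, hav, hcx⟩
    · exact (nonadj4 h5 hcard d34 hb5.symm hc5.symm hb6.symm hc6.symm hc7.symm
        d23 d24 hb4.symm hc4.symm n21 n22 hb1 hc1).elim
    · have hβm := huniq β hb3 hb4 hb5 hb6
      rcases hβm with h | h | h | h | h
      · exact (noQuad β c1 c2 d1 d2 (Or.inl h) hdist hav hcx).elim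
      · exact (noQuad β c1 c2 d1 d2 (Or.inr (Or.inl h)) hdist hav hcx).elim
      · exact (noQuad β c1 c2 d1 d2 (Or.inr (Or.inr (Or.inl h))) hdist hav hcx).elim
      · exact (noQuad β c1 c2 d1 d2 (Or.inr (Or.inr (Or.inr h))) hdist hav hcx).elim
      · rw [h] at hb1 hb2
        exact ⟨hb1, hb2⟩
  · exact (noQuad s c1 c2 d1 d2
      (by rcases hsm with rfl | rfl
          · exact Or.inl rfl
          · exact Or.inr (Or.inl rfl)) hdist hav hcx).elim

end GBsec

/-- A 5-connected, contraction critical quasi 5-connected graph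
has at least 10 vertices. -/
theorem stmt7 {V : Type*} [Fintype V] [DecidableEq V] (G : SimpleGraph V)
    (h5 : IsKConnected 5 G) (hcc : ContractionCriticalQuasiFive G) :
    10 ≤ Fintype.card V := by
  by_contra hlt
  push_neg at hlt
  have hcard : Fintype.card V ≤ 9 := by omega
  obtain ⟨x, y, hxy⟩ := exists_edge h5
  obtain ⟨h9, p1, p2, q1, q2, ⟨d12, d13, d14, d23, d24, d34⟩, -,
    n11, n12, n21, n22⟩ := STR h5 hcc hcard hxy
  by_cases hp : G.Adj p1 p2
  · -- Case A
    obtain ⟨-, a1, a2, b1, b2, ⟨da1, da2, da3, da4, da5, da6⟩,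
      ⟨ha1p1, ha1p2, ha2p1, ha2p2, hb1p1, hb1p2, hb2p1, hb2p2⟩,
      ca1, ca2, ca3, ca4⟩ := STR h5 hcc hcard hp
    have haq11 : a1 ≠ q1 := by
      intro h; rw [h] at ca1 ca2 da2 da3
      exact nonadj4 h5 hcard d12 hb1p1.symm hb2p1.symm hb1p2.symm hb2p2.symm da6
        d13.symm d23.symm da2 da3 (fun hh => n11 hh.symm) (fun hh => n21 hh.symm) ca1 ca2
    have haq12 : a1 ≠ q2 := by
      intro h; rw [h] at ca1 ca2 da2 da3
      exact nonadj4 h5 hcard d12 hb1p1.symm hb2p1.symm hb1p2.symm hb2p2.symm da6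
        d14.symm d24.symm da2 da3 (fun hh => n12 hh.symm) (fun hh => n22 hh.symm) ca1 ca2
    have haq21 : a2 ≠ q1 := by
      intro h; rw [h] at ca3 ca4 da4 da5
      exact nonadj4 h5 hcard d12 hb1p1.symm hb2p1.symm hb1p2.symm hb2p2.symm da6
        d13.symm d23.symm da4 da5 (fun hh => n11 hh.symm) (fun hh => n21 hh.symm) ca3 ca4
    have haq22 : a2 ≠ q2 := by
      intro h; rw [h] at ca3 ca4 da4 da5
      exact nonadj4 h5 hcard d12 hb1p1.symm hb2p1.symm hb1p2.symm hb2p2.symm da6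
        d14.symm d24.symm da4 da5 (fun hh => n12 hh.symm) (fun hh => n22 hh.symm) ca3 ca4
    have hbq11 : b1 ≠ q1 := by
      intro h; rw [h] at ca1 ca3 da2 da4
      exact nonadj4 h5 hcard d12 ha1p1.symm ha2p1.symm ha1p2.symm ha2p2.symm da1
        d13.symm d23.symm da2.symm da4.symm (fun hh => n11 hh.symm) (fun hh => n21 hh.symm)
        (fun hh => ca1 hh.symm) (fun hh => ca3 hh.symm)
    have hbq12 : b1 ≠ q2 := by
      intro h; rw [h] at ca1 ca3 da2 da4
      exact nonadj4 h5 hcard d12 ha1p1.symm ha2p1.symm ha1p2.symm ha2p2.symm da1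
        d14.symm d24.symm da2.symm da4.symm (fun hh => n12 hh.symm) (fun hh => n22 hh.symm)
        (fun hh => ca1 hh.symm) (fun hh => ca3 hh.symm)
    have hbq21 : b2 ≠ q1 := by
      intro h; rw [h] at ca2 ca4 da3 da5
      exact nonadj4 h5 hcard d12 ha1p1.symm ha2p1.symm ha1p2.symm ha2p2.symm da1
        d13.symm d23.symm da3.symm da5.symm (fun hh => n11 hh.symm) (fun hh => n21 hh.symm)
        (fun hh => ca2 hh.symm) (fun hh => ca4 hh.symm)
    have hbq22 : b2 ≠ q2 := by
      intro h; rw [h] at ca2 ca4 da3 da5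
      exact nonadj4 h5 hcard d12 ha1p1.symm ha2p1.symm ha1p2.symm ha2p2.symm da1
        d14.symm d24.symm da3.symm da5.symm (fun hh => n12 hh.symm) (fun hh => n22 hh.symm)
        (fun hh => ca2 hh.symm) (fun hh => ca4 hh.symm)
    have hex : (({p1, p2, q1, q2, a1, a2, b1, b2} : Set V)ᶜ).Nonempty := by
      apply Set.nonempty_of_ncard_ne_zero
      have h8 : ({p1, p2, q1, q2, a1, a2, b1, b2} : Set V).ncard = 8 := by
        rw [Set.ncard_insert_of_notMem
            (by simp [d12, d13, d14, Ne.symm ha1p1, Ne.symm ha2p1, Ne.symm hb1p1,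
              Ne.symm hb2p1]),
          Set.ncard_insert_of_notMem
            (by simp [d23, d24, Ne.symm ha1p2, Ne.symm ha2p2, Ne.symm hb1p2,
              Ne.symm hb2p2]),
          Set.ncard_insert_of_notMem
            (by simp [d34, Ne.symm haq11, Ne.symm haq21, Ne.symm hbq11, Ne.symm hbq21]),
          Set.ncard_insert_of_notMem
            (by simp [Ne.symm haq12, Ne.symm haq22, Ne.symm hbq12, Ne.symm hbq22]),
          Set.ncard_insert_of_notMem (by simp [da1, da2, da3]),
          Set.ncard_insert_of_notMem (by simp [da4, da5]),
          Set.ncard_insert_of_notMem (by simp [da6]), Set.ncard_singleton]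
      have hco := Set.ncard_add_ncard_compl ({p1, p2, q1, q2, a1, a2, b1, b2} : Set V)
      have hn : Nat.card V = Fintype.card V := Nat.card_eq_fintype_card
      omega
    obtain ⟨s5, hz⟩ := hex
    simp only [Set.mem_compl_iff, Set.mem_insert_iff, Set.mem_singleton_iff] at hz
    push_neg at hz
    obtain ⟨hz1, hz2, hz3, hz4, hz5, hz6, hz7, hz8⟩ := hz
    have huniq := five_eq h9 ⟨d12, d13, d14, d23, d24, d34⟩
      ⟨da1, da2, da3, hz5.symm, da4, da5, hz6.symm, da6, hz7.symm, hz8.symm⟩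
      ⟨ha1p1, ha1p2, haq11, haq12⟩ ⟨ha2p1, ha2p2, haq21, haq22⟩
      ⟨hb1p1, hb1p2, hbq11, hbq12⟩ ⟨hb2p1, hb2p2, hbq21, hbq22⟩
      ⟨hz1, hz2, hz3, hz4⟩
    have r1 := getBeta h5 hcc h9 d12 d13 d14 d23 d24 d34 n11 n12 n21 n22
      da1 da2 da3 da4 da5 da6
      ⟨ha1p1, ha1p2, haq11, haq12⟩ ⟨ha2p1, ha2p2, haq21, haq22⟩
      ⟨hb1p1, hb1p2, hbq11, hbq12⟩ ⟨hb2p1, hb2p2, hbq21, hbq22⟩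
      ca1 ca2 ca3 ca4 hz1 hz2 hz3 hz4 hz5 hz6 hz7 hz8 huniq
    have r2 := getBeta h5 hcc h9 d12.symm d23 d24 d13 d14 d34 n21 n22 n11 n12
      da1 da2 da3 da4 da5 da6
      ⟨ha1p2, ha1p1, haq11, haq12⟩ ⟨ha2p2, ha2p1, haq21, haq22⟩
      ⟨hb1p2, hb1p1, hbq11, hbq12⟩ ⟨hb2p2, hb2p1, hbq21, hbq22⟩
      ca1 ca2 ca3 ca4 hz2 hz1 hz3 hz4 hz5 hz6 hz7 hz8
      (fun z hh1 hh2 hh3 hh4 => huniq z hh2 hh1 hh3 hh4)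
    exact r1.1 r2.2
  · -- Case B
    have hex : (({p1, p2, q1, q2} : Set V)ᶜ).Nonempty := by
      apply Set.nonempty_of_ncard_ne_zero
      have h4 : ({p1, p2, q1, q2} : Set V).ncard = 4 := by
        rw [Set.ncard_insert_of_notMem (by simp [d12, d13, d14]),
          Set.ncard_insert_of_notMem (by simp [d23, d24]),
          Set.ncard_insert_of_notMem (by simp [d34]), Set.ncard_singleton]
      have hco := Set.ncard_add_ncard_compl ({p1, p2, q1, q2} : Set V)
      have hn : Nat.card V = Fintype.card V := Nat.card_eq_fintype_card
      omega
    obtain ⟨t₀, hz⟩ := hex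
    simp only [Set.mem_compl_iff, Set.mem_insert_iff, Set.mem_singleton_iff] at hz
    push_neg at hz
    obtain ⟨ht1, ht2, ht3, ht4⟩ := hz
    have hpt : G.Adj p1 t₀ := by
      by_contra hno
      exact nonadj4 h5 hcard d23 d24 (Ne.symm ht2) d34 (Ne.symm ht3) (Ne.symm ht4)
        d12 d13 d14 (Ne.symm ht1) hp n11 n12 hno
    have noLeft : ∀ c : V, ¬G.Adj p2 c → G.Adj p1 c → c ≠ p1 → c ≠ p2 → c ≠ q1 →
        c ≠ q2 → False := by
      intro c hc1 hc2 hc3 hc4 hc5 hc6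
      exact nonadj4 h5 hcard d13 d14 (Ne.symm hc3) d34 (Ne.symm hc5) (Ne.symm hc6)
        d12.symm d23 d24 (Ne.symm hc4) (fun h => hp h.symm) n21 n22 hc1
    have hSL1 := SL h5 hcc hcard d12 d13 d14 d23 d24 d34 n11 n12 n21 n22 hpt
    rcases hSL1 with ⟨c, hc1, hc2, hc3, hc4, hc5, hc6, -⟩ |
      ⟨a1, a2, b1, b2, ⟨da1, da2, da3, da4, da5, da6⟩,
        ⟨⟨ha1p1, ha1p2, ha1q1, ha1q2, ha1t⟩, ⟨ha2p1, ha2p2, ha2q1, ha2q2, ha2t⟩,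
         ⟨hb1p1, hb1p2, hb1q1, hb1q2, hb1t⟩, ⟨hb2p1, hb2p2, hb2q1, hb2q2, hb2t⟩⟩,
        ca1, ca2, ca3, ca4⟩
    · exact noLeft c hc1 hc2 hc3 hc4 hc5 hc6
    have hpa1 : G.Adj p1 a1 := by
      by_contra hno
      exact nonadj4 h5 hcard d23 d24 ha1p2.symm d34 ha1q1.symm ha1q2.symm
        d12 d13 d14 ha1p1.symm hp n11 n12 hno
    have hSL2 := SL h5 hcc hcard d12 d13 d14 d23 d24 d34 n11 n12 n21 n22 hpa1
    rcases hSL2 with ⟨c, hc1, hc2, hc3, hc4, hc5, hc6, -⟩ |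
      ⟨c1, c2, e1, e2, ⟨f12, f13, f14, f23, f24, f34⟩,
        ⟨⟨u11, u12, u13, u14, u15⟩, ⟨u21, u22, u23, u24, u25⟩,
         ⟨u31, u32, u33, u34, u35⟩, ⟨u41, u42, u43, u44, u45⟩⟩, x1, x2, x3, x4⟩
    · exact noLeft c hc1 hc2 hc3 hc4 hc5 hc6
    have hmem := four_eq h9
      ⟨d12, d13, d14, ha1p1.symm, d23, d24, ha1p2.symm, d34, ha1q1.symm, ha1q2.symm⟩
      ⟨da4, da5, ha2t, da6, hb1t, hb2t⟩
      ⟨ha2p1, ha2p2, ha2q1, ha2q2, da1.symm⟩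
      ⟨hb1p1, hb1p2, hb1q1, hb1q2, da2.symm⟩
      ⟨hb2p1, hb2p2, hb2q1, hb2q2, da3.symm⟩
      ⟨ht1, ht2, ht3, ht4, ha1t.symm⟩
    exact PL h5 hcard da1 da2 da3 da4 da5 da6 ha1t.symm ha2t.symm hb1t.symm hb2t.symm
      ca1 ca2 ca3 ca4 f12 f13 f14 f23 f24 f34
      (hmem c1 u11 u12 u13 u14 u15) (hmem c2 u21 u22 u23 u24 u25)
      (hmem e1 u31 u32 u33 u34 u35) (hmem e2 u41 u42 u43 u44 u45) x1 x2 x3 x4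
end

section
/- Let G be a graph that is both 5-connected and contraction critical quasi 5-connected, and let A be a nontrivial atom of G (a nontrivial fragment of minimum cardinality). Then |A| ≤ 3. -/
open SimpleGraph Set

variable {V : Type*}

section helpers

variable {G : SimpleGraph V}

lemma mem_gB {X : Set V} {v : V} :
    v ∈ gBoundary G X ↔ v ∉ X ∧ ∃ a ∈ X, G.Adj v a := Iff.rfl

lemma gB_disj (G : SimpleGraph V) (X : Set V) : Disjoint X (gBoundary G X) :=
  Set.disjoint_left.mpr fun _ ha hb => hb.1 ha

lemma gB_singleton (G : SimpleGraph V) (w : V) :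
    gBoundary G {w} = G.neighborSet w := by
  ext z
  simp only [gBoundary, mem_setOf_eq, mem_singleton_iff, mem_neighborSet]
  constructor
  · rintro ⟨-, a, ha, h⟩; subst ha; exact h.symm
  · intro h
    exact ⟨fun hz => by rw [hz] at h; exact G.loopless.irrefl w h, w, rfl, h.symm⟩

/-- A walk in the induced graph on `Sᶜ` starting in `P` stays in `P`. -/
lemma walk_stay {S P Q : Set V} (hun : P ∪ Q = Sᶜ)
    (hno : ∀ a ∈ P, ∀ b ∈ Q, ¬ G.Adj a b)
    {u v : ↥(Sᶜ)} (w : (G.induce Sᶜ).Walk u v) (hu : u.1 ∈ P) : v.1 ∈ P := by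
  induction w with
  | nil => exact hu
  | @cons a b c h _ ih =>
      apply ih
      have hadj : G.Adj a.1 b.1 := h
      have hb : b.1 ∈ P ∪ Q := by rw [hun]; exact b.2
      rcases hb with h1 | h2
      · exact h1
      · exact absurd hadj (hno _ hu _ h2)

lemma sep_five [Fintype V] (h5 : IsKConnected 5 G) {S : Set V}
    (h : Separates G S) : 5 ≤ S.ncard := by
  by_contra h'
  push_neg at h'
  obtain ⟨P, Q, hP, hQ, hd, hun, hno⟩ := h
  have hconn := h5.2 S h'
  obtain ⟨a, ha⟩ := hP
  obtain ⟨b, hb⟩ := hQ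
  have haS : a ∈ Sᶜ := by rw [← hun]; exact Or.inl ha
  have hbS : b ∈ Sᶜ := by rw [← hun]; exact Or.inr hb
  obtain ⟨w⟩ := hconn.preconnected ⟨a, haS⟩ ⟨b, hbS⟩
  exact Set.disjoint_left.mp hd (walk_stay hun hno w ha) hb

lemma sep_of_parts {P Q S : Set V} (hP : P.Nonempty) (hQ : Q.Nonempty)
    (hd : Disjoint P Q) (hun : P ∪ Q = Sᶜ)
    (hno : ∀ a ∈ P, ∀ b ∈ Q, ¬ G.Adj a b) : Separates G S :=
  ⟨P, Q, hP, hQ, hd, hun, hno⟩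

lemma bd_sep {X : Set V} (hX : X.Nonempty) (hfar : ((X ∪ gBoundary G X)ᶜ).Nonempty) :
    Separates G (gBoundary G X) := by
  refine ⟨X, (X ∪ gBoundary G X)ᶜ, hX, hfar, ?_, ?_, ?_⟩
  · exact disjoint_compl_right.mono_left Set.subset_union_left
  · ext v
    simp only [mem_union, mem_compl_iff]
    constructor
    · rintro (h | h)
      · exact fun hb => hb.1 h
      · exact fun hb => h (Or.inr hb)
    · intro h
      by_cases hX' : v ∈ X
      · exact Or.inl hX'
      · exact Or.inr (fun hb => hb.elim hX' h)
  · intro a ha b hb hadj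
    exact hb (Or.inr ⟨fun hbX => hb (Or.inl hbX), a, ha, hadj.symm⟩)

lemma five_le_bd [Fintype V] (h5 : IsKConnected 5 G) {X : Set V} (hX : X.Nonempty)
    (hfar : ((X ∪ gBoundary G X)ᶜ).Nonempty) : 5 ≤ (gBoundary G X).ncard :=
  sep_five h5 (bd_sep hX hfar)

lemma far_eq (G : SimpleGraph V) (X : Set V) :
    Xᶜ \ gBoundary G X = (X ∪ gBoundary G X)ᶜ := by
  rw [Set.compl_union, Set.diff_eq]

lemma deg_five [Fintype V] (h5 : IsKConnected 5 G) (v : V) :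
    5 ≤ (G.neighborSet v).ncard := by
  have hv : v ∉ G.neighborSet v := fun h => G.loopless.irrefl v h
  have hcard : 6 ≤ Fintype.card V := h5.1
  by_contra h'
  push_neg at h'
  -- find a vertex outside N(v) ∪ {v}
  have hne : insert v (G.neighborSet v) ≠ univ := by
    intro h
    have h1 : (insert v (G.neighborSet v)).ncard ≤ 5 :=
      le_trans (Set.ncard_insert_le _ _) (by omega)
    rw [h, Set.ncard_univ, Nat.card_eq_fintype_card] at h1
    omega
  obtain ⟨u, hu⟩ := (Set.ne_univ_iff_exists_notMem _).mp hne
  have huv : u ≠ v := fun h => hu (h ▸ Set.mem_insert _ _)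
  have huN : u ∉ G.neighborSet v := fun h => hu (Set.mem_insert_of_mem _ h)
  have hsep : Separates G (G.neighborSet v) := by
    refine ⟨{v}, (G.neighborSet v)ᶜ \ {v}, ⟨v, rfl⟩, ⟨u, huN, huv⟩, ?_, ?_, ?_⟩
    · exact Set.disjoint_left.mpr fun a ha hb => hb.2 ha
    · rw [Set.union_diff_cancel' (by simp [hv]) (by intro a ha; simp at ha; simp [ha])]
    · rintro a rfl b hb hadj
      exact hb.1 hadj
  have := sep_five h5 hsep
  omega

end helpers

section frag

variable [Fintype V] {G : SimpleGraph V}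

lemma fragment_of (h5 : IsKConnected 5 G) {X : Set V} (hX : X.Nonempty)
    (hfar : ((X ∪ gBoundary G X)ᶜ).Nonempty)
    (hbd : (gBoundary G X).ncard ≤ 5) : IsFragment G X := by
  refine ⟨hX, ?_, fun S hS => le_trans hbd (sep_five h5 hS)⟩
  rw [far_eq]; exact hfar

lemma ncard_split3_s8 {P1 P2 P3 : Set V} (hc : P1 ∪ P2 ∪ P3 = univ)
    (h12 : Disjoint P1 P2) (h13 : Disjoint P1 P3) (h23 : Disjoint P2 P3)
    (X : Set V) :
    X.ncard = (X ∩ P1).ncard + (X ∩ P2).ncard + (X ∩ P3).ncard := by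
  have hX : X = (X ∩ P1) ∪ (X ∩ P2) ∪ (X ∩ P3) := by
    rw [← Set.inter_union_distrib_left, ← Set.inter_union_distrib_left, hc, Set.inter_univ]
  have d12 : Disjoint (X ∩ P1) (X ∩ P2) := h12.mono Set.inter_subset_right Set.inter_subset_right
  have d13 : Disjoint ((X ∩ P1) ∪ (X ∩ P2)) (X ∩ P3) :=
    Disjoint.union_left (h13.mono Set.inter_subset_right Set.inter_subset_right)
      (h23.mono Set.inter_subset_right Set.inter_subset_right)
  calc X.ncard = ((X ∩ P1) ∪ (X ∩ P2) ∪ (X ∩ P3)).ncard := by rw [← hX]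
    _ = ((X ∩ P1) ∪ (X ∩ P2)).ncard + (X ∩ P3).ncard := Set.ncard_union_eq d13
    _ = (X ∩ P1).ncard + (X ∩ P2).ncard + (X ∩ P3).ncard := by rw [Set.ncard_union_eq d12]

lemma ncard_union3 {X Y Z : Set V} (h12 : Disjoint X Y) (h13 : Disjoint X Z)
    (h23 : Disjoint Y Z) :
    (X ∪ Y ∪ Z).ncard = X.ncard + Y.ncard + Z.ncard := by
  rw [Set.ncard_union_eq (Disjoint.union_left h13 h23), Set.ncard_union_eq h12]

lemma corner_bd {P P' Q Q' : Set V}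
    (hP : ∀ ⦃v u : V⦄, G.Adj v u → u ∈ P → v ∈ P ∪ P')
    (hQ : ∀ ⦃v u : V⦄, G.Adj v u → u ∈ Q → v ∈ Q ∪ Q') :
    gBoundary G (P ∩ Q) ⊆ (P ∩ Q') ∪ (P' ∩ Q) ∪ (P' ∩ Q') := by
  rintro v ⟨hv, u, ⟨huP, huQ⟩, hadj⟩
  rcases hP hadj huP with h1 | h1
  · rcases hQ hadj huQ with h2 | h2
    · exact absurd ⟨h1, h2⟩ hv
    · exact Or.inl (Or.inl ⟨h1, h2⟩)
  · rcases hQ hadj huQ with h2 | h2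
    · exact Or.inl (Or.inr ⟨h1, h2⟩)
    · exact Or.inr ⟨h1, h2⟩

lemma corner_ge (h5 : IsKConnected 5 G) {X L O : Set V} (hXne : X.Nonempty)
    (hbd : gBoundary G X ⊆ L) (hO : O.Nonempty)
    (hdisjO : Disjoint O (X ∪ gBoundary G X)) : 5 ≤ L.ncard := by
  have hfar : ((X ∪ gBoundary G X)ᶜ).Nonempty := by
    obtain ⟨o, ho⟩ := hO
    exact ⟨o, fun hmem => Set.disjoint_left.mp hdisjO ho hmem⟩
  exact le_trans (five_le_bd h5 hXne hfar) (Set.ncard_le_ncard hbd)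

lemma contractE_adj_of_adj {x y : V} [DecidableEq V] {a b : {v : V // v ≠ y}}
    (h : G.Adj a.1 b.1) : (contractE G x y).Adj a b := by
  rw [contractE, SimpleGraph.fromRel_adj]
  exact ⟨fun hh => h.ne (congrArg Subtype.val hh), Or.inl (Or.inl h)⟩

lemma kcontract [DecidableEq V] (h5 : IsKConnected 5 G) {x y : V} (hxy : G.Adj x y) :
    IsKConnected 4 (contractE G x y) := by
  constructor
  · have h1 : Fintype.card {v : V // v ≠ y} = Fintype.card V - 1 := by
      have := Fintype.card_subtype_compl (fun v : V => v = y)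
      simp only [Fintype.card_subtype_eq] at this
      convert this using 2
    have := h5.1
    omega
  · intro S' hS'
    set S : Set V := (Subtype.val '' S') ∪ {y} with hSdef
    have hyS : y ∈ S := Or.inr rfl
    have hS : S.ncard < 5 := by
      have h1 : S = insert y (Subtype.val '' S') := by
        rw [hSdef, Set.union_singleton]
      have h2 : (Subtype.val '' S').ncard = S'.ncard :=
        Set.ncard_image_of_injective _ Subtype.val_injective
      have h3 := Set.ncard_insert_le y (Subtype.val '' S')
      rw [h1]
      omega
    have hconn := h5.2 S hS
    have hmap : ∀ v : ↥(Sᶜ), v.1 ≠ y := fun v hv => v.2 (hv ▸ hyS)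
    have hmap2 : ∀ (v : ↥(Sᶜ)), (⟨v.1, hmap v⟩ : {w : V // w ≠ y}) ∈ (S'ᶜ : Set {w : V // w ≠ y}) := by
      intro v hv
      exact v.2 (Or.inl ⟨_, hv, rfl⟩)
    let f : (G.induce Sᶜ) →g ((contractE G x y).induce S'ᶜ) :=
      { toFun := fun v => ⟨⟨v.1, hmap v⟩, hmap2 v⟩
        map_rel' := by
          intro a b hab
          exact contractE_adj_of_adj (hab : G.Adj a.1 b.1) }
    have hsurj : Function.Surjective f := by
      rintro ⟨⟨v, hvy⟩, hvS'⟩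
      have hvS : v ∈ Sᶜ := by
        intro hv
        rcases hv with h | h
        · obtain ⟨s', hs', hval⟩ := h
          exact hvS' (by rwa [show (⟨v, hvy⟩ : {w : V // w ≠ y}) = s' from Subtype.ext hval.symm])
        · exact hvy h
      exact ⟨⟨v, hvS⟩, by apply Subtype.ext; apply Subtype.ext; rfl⟩
    exact hconn.map f hsurj

end frag

section liftcut

variable [Fintype V] [DecidableEq V] {G : SimpleGraph V}

lemma frag_of_edge (h5 : IsKConnected 5 G)
    (hcc : ContractionCriticalQuasiFive G) {x y : V} (hxy : G.Adj x y) :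
    ∃ S B Bb : Set V, S.ncard = 5 ∧ x ∈ S ∧ y ∈ S ∧
      gBoundary G B = S ∧ gBoundary G Bb = S ∧
      Disjoint B Bb ∧ B ∪ Bb = Sᶜ ∧
      IsNontrivialFragment G B ∧ IsNontrivialFragment G Bb := by
  classical
  have hnq := hcc.2 x y hxy
  have hk4 := kcontract h5 hxy
  have hcut : ∃ T', IsNontrivialFourCut (contractE G x y) T' := by
    by_contra h
    push_neg at h
    exact hnq ⟨hk4, h⟩
  obtain ⟨T', hT4, A', B', hA'2, hB'2, hd', hU', hno'⟩ := hcut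
  set xt : {v : V // v ≠ y} := ⟨x, hxy.ne⟩ with hxt
  have hyup : ∀ W : Set {v : V // v ≠ y}, y ∉ Subtype.val '' W := by
    rintro W ⟨w, -, hw⟩
    exact w.2 hw
  have hupmem : ∀ (W : Set {v : V // v ≠ y}) (v : V) (hv : v ≠ y),
      v ∈ Subtype.val '' W ↔ (⟨v, hv⟩ : {v : V // v ≠ y}) ∈ W := by
    intro W v hv
    constructor
    · rintro ⟨w, hw, hval⟩
      rwa [show (⟨v, hv⟩ : {v : V // v ≠ y}) = w from Subtype.ext hval.symm]
    · intro h
      exact ⟨_, h, rfl⟩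
  -- the merged vertex must be in the cut
  have hxT' : xt ∈ T' := by
    by_contra hxT
    have hxAB : xt ∈ A' ∪ B' := by rw [hU']; exact hxT
    have key : ∀ P Q : Set {v : V // v ≠ y}, Q.Nonempty → Disjoint P Q →
        P ∪ Q = T'ᶜ → (∀ a ∈ P, ∀ b ∈ Q, ¬ (contractE G x y).Adj a b) →
        xt ∈ P → False := by
      intro P Q hQne hd hU hno hxP
      have hsep : Separates G (Subtype.val '' T') := by
        refine ⟨Subtype.val '' P ∪ {y}, Subtype.val '' Q, ⟨y, Or.inr (Set.mem_singleton y)⟩,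
          hQne.image _, ?_, ?_, ?_⟩
        · refine Set.disjoint_left.mpr ?_
          rintro a (haP | rfl) haQ
          · obtain ⟨p, hp, hpv⟩ := haP
            obtain ⟨q, hq, hqv⟩ := haQ
            rw [← hqv] at hpv
            rw [show p = q from Subtype.ext hpv] at hp
            exact Set.disjoint_left.mp hd hp hq
          · exact hyup _ haQ
        · ext v
          by_cases hv : v = y
          · subst hv
            simp only [Set.mem_union, Set.mem_singleton_iff, Set.mem_compl_iff]
            exact ⟨fun _ => hyup T', fun _ => Or.inl (Or.inr trivial)⟩
          · simp only [Set.mem_union, Set.mem_singleton_iff, Set.mem_compl_iff,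
              hupmem _ v hv, hv, or_false]
            have := Set.ext_iff.mp hU ⟨v, hv⟩
            simp only [Set.mem_union, Set.mem_compl_iff] at this
            tauto
        · rintro a (haP | rfl) b hbQ hadj
          · obtain ⟨p, hp, rfl⟩ := haP
            obtain ⟨q, hq, rfl⟩ := hbQ
            exact hno p hp q hq (contractE_adj_of_adj hadj)
          · obtain ⟨q, hq, rfl⟩ := hbQ
            refine hno xt hxP q hq ?_
            rw [contractE, SimpleGraph.fromRel_adj]
            refine ⟨fun hh => Set.disjoint_left.mp hd (hh ▸ hxP) hq,
              Or.inl (Or.inr (Or.inl ⟨rfl, hadj⟩))⟩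
      have h5le := sep_five h5 hsep
      rw [Set.ncard_image_of_injective _ Subtype.val_injective, hT4] at h5le
      omega
    rcases hxAB with hxA | hxB
    · exact key A' B' (Set.nonempty_of_ncard_ne_zero (by omega)) hd' hU' hno' hxA
    · refine key B' A' (Set.nonempty_of_ncard_ne_zero (by omega)) hd'.symm
        (by rw [Set.union_comm]; exact hU') (fun a ha b hb hadj => hno' b hb a ha hadj.symm) hxB
  -- now build the fragment pair in G
  set S : Set V := insert y (Subtype.val '' T') with hSdef
  set B : Set V := Subtype.val '' A' with hBdef
  set Bb : Set V := Subtype.val '' B' with hBbdef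
  have hS5 : S.ncard = 5 := by
    rw [hSdef, Set.ncard_insert_of_notMem (hyup T'),
      Set.ncard_image_of_injective _ Subtype.val_injective, hT4]
  have hxS : x ∈ S := Or.inr ⟨xt, hxT', rfl⟩
  have hyS : y ∈ S := Or.inl rfl
  have hdisj : Disjoint B Bb := by
    refine Set.disjoint_left.mpr ?_
    rintro a ⟨p, hp, hpv⟩ ⟨q, hq, hqv⟩
    rw [← hqv] at hpv
    rw [show p = q from Subtype.ext hpv] at hp
    exact Set.disjoint_left.mp hd' hp hq
  have hunion : B ∪ Bb = Sᶜ := by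
    ext v
    by_cases hv : v = y
    · subst hv
      constructor
      · rintro (h | h)
        · exact absurd h (hyup _)
        · exact absurd h (hyup _)
      · intro h
        exact absurd (Set.mem_insert v _) h
    · simp only [Set.mem_union, hBdef, hBbdef, hupmem _ v hv, Set.mem_compl_iff, hSdef,
        Set.mem_insert_iff, hv, false_or, hupmem T' v hv]
      have := Set.ext_iff.mp hU' ⟨v, hv⟩
      simp only [Set.mem_union, Set.mem_compl_iff] at this
      tauto
  have hnoBB : ∀ a ∈ B, ∀ b ∈ Bb, ¬ G.Adj a b := by
    rintro a ⟨p, hp, rfl⟩ b ⟨q, hq, rfl⟩ hadj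
    exact hno' p hp q hq (contractE_adj_of_adj hadj)
  have hB2 : 2 ≤ B.ncard := by
    rw [hBdef, Set.ncard_image_of_injective _ Subtype.val_injective]; exact hA'2
  have hBb2 : 2 ≤ Bb.ncard := by
    rw [hBbdef, Set.ncard_image_of_injective _ Subtype.val_injective]; exact hB'2
  have hBne : B.Nonempty := Set.nonempty_of_ncard_ne_zero (by omega)
  have hBbne : Bb.Nonempty := Set.nonempty_of_ncard_ne_zero (by omega)
  -- boundaries
  have hbdsub : ∀ {P Q : Set V}, P ∪ Q = Sᶜ → (∀ a ∈ P, ∀ b ∈ Q, ¬ G.Adj a b) →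
      gBoundary G P ⊆ S := by
    rintro P Q hun hno v ⟨hvP, u, huP, hadj⟩
    by_contra hvS
    have hv : v ∈ P ∪ Q := by rw [hun]; exact hvS
    rcases hv with h | h
    · exact hvP h
    · exact hno u huP v h hadj.symm
  have hbdBsub : gBoundary G B ⊆ S := hbdsub hunion hnoBB
  have hbdBbsub : gBoundary G Bb ⊆ S := by
    refine hbdsub (by rw [Set.union_comm]; exact hunion) ?_
    exact fun a ha b hb hadj => hnoBB b hb a ha hadj.symm
  have hfarB : Bb ⊆ (B ∪ gBoundary G B)ᶜ := by
    intro b hb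
    rintro (h | h)
    · exact Set.disjoint_left.mp hdisj h hb
    · have : b ∈ S := hbdBsub h
      have : b ∈ Sᶜ := by rw [← hunion]; exact Or.inr hb
      exact this ‹b ∈ S›
  have hfarBb : B ⊆ (Bb ∪ gBoundary G Bb)ᶜ := by
    intro b hb
    rintro (h | h)
    · exact Set.disjoint_left.mp hdisj hb h
    · have : b ∈ S := hbdBbsub h
      have : b ∈ Sᶜ := by rw [← hunion]; exact Or.inl hb
      exact this ‹b ∈ S›
  have hbdB : gBoundary G B = S := by
    refine Set.eq_of_subset_of_ncard_le hbdBsub ?_ (Set.toFinite _)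
    rw [hS5]
    exact five_le_bd h5 hBne ⟨_, hfarB hBbne.some_mem⟩
  have hbdBb : gBoundary G Bb = S := by
    refine Set.eq_of_subset_of_ncard_le hbdBbsub ?_ (Set.toFinite _)
    rw [hS5]
    exact five_le_bd h5 hBbne ⟨_, hfarBb hBne.some_mem⟩
  have hfragB : IsNontrivialFragment G B := by
    refine ⟨fragment_of h5 hBne ⟨_, hfarB hBbne.some_mem⟩ (by rw [hbdB, hS5]), hB2, ?_⟩
    rw [far_eq]
    exact le_trans hBb2 (Set.ncard_le_ncard hfarB)
  have hfragBb : IsNontrivialFragment G Bb := by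
    refine ⟨fragment_of h5 hBbne ⟨_, hfarBb hBne.some_mem⟩ (by rw [hbdBb, hS5]), hBb2, ?_⟩
    rw [far_eq]
    exact le_trans hB2 (Set.ncard_le_ncard hfarBb)
  exact ⟨S, B, Bb, hS5, hxS, hyS, hbdB, hbdBb, hdisj, hunion, hfragB, hfragBb⟩

end liftcut

section tight

variable [Fintype V] {G : SimpleGraph V}

set_option maxHeartbeats 1000000 in
lemma tight (h5 : IsKConnected 5 G) {A : Set V}
    (hA : IsNontrivialFragment G A)
    (hatom : ∀ B : Set V, IsNontrivialFragment G B → A.ncard ≤ B.ncard)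
    (hm : 4 ≤ A.ncard)
    (hT5 : (gBoundary G A).ncard = 5)
    (hAbar : A.ncard ≤ ((A ∪ gBoundary G A)ᶜ).ncard)
    {S B Bb : Set V}
    (hS5 : S.ncard = 5) (hbdB : gBoundary G B = S) (hbdBb : gBoundary G Bb = S)
    (hdisj : Disjoint B Bb) (hun : B ∪ Bb = Sᶜ)
    (hBm : A.ncard ≤ B.ncard) (hBbm : A.ncard ≤ Bb.ncard)
    {u v : V} (hu : u ∈ A ∩ S) (hv : v ∈ A ∩ S) (huv : u ≠ v) :
    (A ∩ S).ncard = 2 ∧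
    ∃ w w', A ∩ B = {w} ∧ A ∩ Bb = {w'} ∧
      G.neighborSet w = (A ∩ S) ∪ (gBoundary G A ∩ B) ∪ (gBoundary G A ∩ S) ∧
      G.neighborSet w' = (A ∩ S) ∪ (gBoundary G A ∩ Bb) ∪ (gBoundary G A ∩ S) := by
  classical
  set T : Set V := gBoundary G A with hT
  set Ab : Set V := (A ∪ T)ᶜ with hAbdef
  -- disjointness and cover facts
  have hdAT : Disjoint A T := gB_disj G A
  have hdAAb : Disjoint A Ab := disjoint_compl_right.mono_left Set.subset_union_left
  have hdTAb : Disjoint T Ab := disjoint_compl_right.mono_left Set.subset_union_right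
  have hcoverA : A ∪ T ∪ Ab = univ := Set.union_compl_self _
  have hdBS : Disjoint B S := by rw [← hbdB]; exact gB_disj G B
  have hdBbS : Disjoint Bb S := by rw [← hbdBb]; exact gB_disj G Bb
  have hcoverB : B ∪ S ∪ Bb = univ := by
    ext z
    simp only [Set.mem_union, Set.mem_univ, iff_true]
    by_cases hz : z ∈ S
    · exact Or.inl (Or.inr hz)
    · have : z ∈ B ∪ Bb := by rw [hun]; exact hz
      rcases this with h | h
      · exact Or.inl (Or.inl h)
      · exact Or.inr h
  -- closure properties
  have closedA : ∀ ⦃p q : V⦄, G.Adj p q → q ∈ A → p ∈ A ∪ T := by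
    intro p q hadj hq
    by_cases hp : p ∈ A
    · exact Or.inl hp
    · exact Or.inr ⟨hp, q, hq, hadj⟩
  have closedAb : ∀ ⦃p q : V⦄, G.Adj p q → q ∈ Ab → p ∈ Ab ∪ T := by
    intro p q hadj hq
    by_cases hp : p ∈ Ab
    · exact Or.inl hp
    · have hp' : p ∈ A ∪ T := Set.notMem_compl_iff.mp hp
      rcases hp' with h | h
      · exfalso
        have hqT : q ∈ T := by
          rw [hT]
          exact ⟨fun hqA => Set.disjoint_left.mp hdAAb hqA hq, p, h, hadj.symm⟩
        exact Set.disjoint_left.mp hdTAb hqT hq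
      · exact Or.inr h
  have closedB : ∀ ⦃p q : V⦄, G.Adj p q → q ∈ B → p ∈ B ∪ S := by
    intro p q hadj hq
    by_cases hp : p ∈ B
    · exact Or.inl hp
    · exact Or.inr (hbdB ▸ (⟨hp, q, hq, hadj⟩ : p ∈ gBoundary G B))
  have closedBb : ∀ ⦃p q : V⦄, G.Adj p q → q ∈ Bb → p ∈ Bb ∪ S := by
    intro p q hadj hq
    by_cases hp : p ∈ Bb
    · exact Or.inl hp
    · exact Or.inr (hbdBb ▸ (⟨hp, q, hq, hadj⟩ : p ∈ gBoundary G Bb))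
  -- a2 ≥ 2
  have ha2 : 2 ≤ (A ∩ S).ncard := by
    have hsub : ({u, v} : Set V) ⊆ A ∩ S := by
      rintro z (rfl | rfl)
      · exact hu
      · exact hv
    calc 2 = ({u, v} : Set V).ncard := (Set.ncard_pair huv).symm
      _ ≤ (A ∩ S).ncard := Set.ncard_le_ncard hsub
  have hAne : A.Nonempty := Set.nonempty_of_ncard_ne_zero (by omega)
  have hAbne : Ab.Nonempty := Set.nonempty_of_ncard_ne_zero (by omega)
  -- the nine-number bookkeeping
  have eA := ncard_split3_s8 hcoverB hdBS hdisj hdBbS.symm A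
  have eT := ncard_split3_s8 hcoverB hdBS hdisj hdBbS.symm T
  have eAb := ncard_split3_s8 hcoverB hdBS hdisj hdBbS.symm Ab
  have eB := ncard_split3_s8 hcoverA hdAT hdAAb hdTAb B
  rw [Set.inter_comm B A, Set.inter_comm B T, Set.inter_comm B Ab] at eB
  have eS := ncard_split3_s8 hcoverA hdAT hdAAb hdTAb S
  rw [Set.inter_comm S A, Set.inter_comm S T, Set.inter_comm S Ab] at eS
  have eBb := ncard_split3_s8 hcoverA hdAT hdAAb hdTAb Bb
  rw [Set.inter_comm Bb A, Set.inter_comm Bb T, Set.inter_comm Bb Ab] at eBb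
  -- L-shapes
  have hbd1 : gBoundary G (A ∩ B) ⊆ (A ∩ S) ∪ (T ∩ B) ∪ (T ∩ S) := corner_bd closedA closedB
  have hbd3 : gBoundary G (A ∩ Bb) ⊆ (A ∩ S) ∪ (T ∩ Bb) ∪ (T ∩ S) := corner_bd closedA closedBb
  have hbd1' : gBoundary G (Ab ∩ B) ⊆ (Ab ∩ S) ∪ (T ∩ B) ∪ (T ∩ S) := corner_bd closedAb closedB
  have hbd3' : gBoundary G (Ab ∩ Bb) ⊆ (Ab ∩ S) ∪ (T ∩ Bb) ∪ (T ∩ S) := corner_bd closedAb closedBb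
  have L1card : ((A ∩ S) ∪ (T ∩ B) ∪ (T ∩ S)).ncard
      = (A ∩ S).ncard + (T ∩ B).ncard + (T ∩ S).ncard :=
    ncard_union3 (hdAT.mono Set.inter_subset_left Set.inter_subset_left)
      (hdAT.mono Set.inter_subset_left Set.inter_subset_left)
      (hdBS.mono Set.inter_subset_right Set.inter_subset_right)
  have L3card : ((A ∩ S) ∪ (T ∩ Bb) ∪ (T ∩ S)).ncard
      = (A ∩ S).ncard + (T ∩ Bb).ncard + (T ∩ S).ncard :=
    ncard_union3 (hdAT.mono Set.inter_subset_left Set.inter_subset_left)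
      (hdAT.mono Set.inter_subset_left Set.inter_subset_left)
      (hdBbS.mono Set.inter_subset_right Set.inter_subset_right)
  have L1'card : ((Ab ∩ S) ∪ (T ∩ B) ∪ (T ∩ S)).ncard
      = (Ab ∩ S).ncard + (T ∩ B).ncard + (T ∩ S).ncard :=
    ncard_union3 (hdTAb.symm.mono Set.inter_subset_left Set.inter_subset_left)
      (hdTAb.symm.mono Set.inter_subset_left Set.inter_subset_left)
      (hdBS.mono Set.inter_subset_right Set.inter_subset_right)
  have L3'card : ((Ab ∩ S) ∪ (T ∩ Bb) ∪ (T ∩ S)).ncard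
      = (Ab ∩ S).ncard + (T ∩ Bb).ncard + (T ∩ S).ncard :=
    ncard_union3 (hdTAb.symm.mono Set.inter_subset_left Set.inter_subset_left)
      (hdTAb.symm.mono Set.inter_subset_left Set.inter_subset_left)
      (hdBbS.mono Set.inter_subset_right Set.inter_subset_right)
  -- disjointness of far witnesses
  have hOA : ∀ {X L : Set V}, X ⊆ A → gBoundary G X ⊆ L → L ⊆ A ∪ T →
      Disjoint Ab (X ∪ gBoundary G X) := by
    intro X L hXA hbd hL
    refine Set.disjoint_left.mpr ?_
    rintro z hz (h | h)
    · exact hz (Or.inl (hXA h))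
    · exact hz (hL (hbd h))
  have hOAb : ∀ {X L : Set V}, X ⊆ Ab → gBoundary G X ⊆ L → L ⊆ Ab ∪ T →
      Disjoint A (X ∪ gBoundary G X) := by
    intro X L hXA hbd hL
    refine Set.disjoint_left.mpr ?_
    rintro z hz (h | h)
    · rcases hXA h with h'
      exact Set.disjoint_left.mp hdAAb hz h'
    · rcases hL (hbd h) with h' | h'
      · exact Set.disjoint_left.mp hdAAb hz h'
      · exact Set.disjoint_left.mp hdAT hz h'
  have hL1sub : (A ∩ S) ∪ (T ∩ B) ∪ (T ∩ S) ⊆ A ∪ T := by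
    rintro z ((h | h) | h)
    · exact Or.inl h.1
    · exact Or.inr h.1
    · exact Or.inr h.1
  have hL3sub : (A ∩ S) ∪ (T ∩ Bb) ∪ (T ∩ S) ⊆ A ∪ T := by
    rintro z ((h | h) | h)
    · exact Or.inl h.1
    · exact Or.inr h.1
    · exact Or.inr h.1
  have hL1'sub : (Ab ∩ S) ∪ (T ∩ B) ∪ (T ∩ S) ⊆ Ab ∪ T := by
    rintro z ((h | h) | h)
    · exact Or.inl h.1
    · exact Or.inr h.1
    · exact Or.inr h.1
  have hL3'sub : (Ab ∩ S) ∪ (T ∩ Bb) ∪ (T ∩ S) ⊆ Ab ∪ T := by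
    rintro z ((h | h) | h)
    · exact Or.inl h.1
    · exact Or.inr h.1
    · exact Or.inr h.1
  -- the P inequalities
  have P1 : 1 ≤ (A ∩ B).ncard → 5 ≤ (A ∩ S).ncard + (T ∩ B).ncard + (T ∩ S).ncard := by
    intro h
    have hne : (A ∩ B).Nonempty := Set.nonempty_of_ncard_ne_zero (by omega)
    have := corner_ge h5 hne hbd1 hAbne (hOA Set.inter_subset_left hbd1 hL1sub)
    rwa [L1card] at this
  have P2 : 1 ≤ (A ∩ Bb).ncard → 5 ≤ (A ∩ S).ncard + (T ∩ Bb).ncard + (T ∩ S).ncard := by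
    intro h
    have hne : (A ∩ Bb).Nonempty := Set.nonempty_of_ncard_ne_zero (by omega)
    have := corner_ge h5 hne hbd3 hAbne (hOA Set.inter_subset_left hbd3 hL3sub)
    rwa [L3card] at this
  have P3 : 1 ≤ (Ab ∩ B).ncard → 5 ≤ (Ab ∩ S).ncard + (T ∩ B).ncard + (T ∩ S).ncard := by
    intro h
    have hne : (Ab ∩ B).Nonempty := Set.nonempty_of_ncard_ne_zero (by omega)
    have := corner_ge h5 hne hbd1' hAne (hOAb Set.inter_subset_left hbd1' hL1'sub)
    rwa [L1'card] at this
  have P4 : 1 ≤ (Ab ∩ Bb).ncard → 5 ≤ (Ab ∩ S).ncard + (T ∩ Bb).ncard + (T ∩ S).ncard := by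
    intro h
    have hne : (Ab ∩ Bb).Nonempty := Set.nonempty_of_ncard_ne_zero (by omega)
    have := corner_ge h5 hne hbd3' hAne (hOAb Set.inter_subset_left hbd3' hL3'sub)
    rwa [L3'card] at this
  -- the Q inequalities (using atom minimality)
  have hfar1 : Ab ⊆ ((A ∩ B) ∪ gBoundary G (A ∩ B))ᶜ := by
    intro z hz
    exact fun hmem => Set.disjoint_left.mp (hOA Set.inter_subset_left hbd1 hL1sub) hz hmem
  have hfar3 : Ab ⊆ ((A ∩ Bb) ∪ gBoundary G (A ∩ Bb))ᶜ := by
    intro z hz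
    exact fun hmem => Set.disjoint_left.mp (hOA Set.inter_subset_left hbd3 hL3sub) hz hmem
  have Q1 : 2 ≤ (A ∩ B).ncard → 6 ≤ (A ∩ S).ncard + (T ∩ B).ncard + (T ∩ S).ncard := by
    intro h2
    by_contra h6
    push_neg at h6
    have hne : (A ∩ B).Nonempty := Set.nonempty_of_ncard_ne_zero (by omega)
    have hfrag : IsFragment G (A ∩ B) := by
      refine fragment_of h5 hne ⟨_, hfar1 hAbne.some_mem⟩ ?_
      refine le_trans (Set.ncard_le_ncard hbd1) ?_
      rw [L1card]; omega
    have hfar2 : 2 ≤ ((A ∩ B)ᶜ \ gBoundary G (A ∩ B)).ncard := by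
      rw [far_eq]
      exact le_trans (by omega) (Set.ncard_le_ncard hfar1)
    have := hatom _ ⟨hfrag, h2, hfar2⟩
    omega
  have Q2 : 2 ≤ (A ∩ Bb).ncard → 6 ≤ (A ∩ S).ncard + (T ∩ Bb).ncard + (T ∩ S).ncard := by
    intro h2
    by_contra h6
    push_neg at h6
    have hne : (A ∩ Bb).Nonempty := Set.nonempty_of_ncard_ne_zero (by omega)
    have hfrag : IsFragment G (A ∩ Bb) := by
      refine fragment_of h5 hne ⟨_, hfar3 hAbne.some_mem⟩ ?_
      refine le_trans (Set.ncard_le_ncard hbd3) ?_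
      rw [L3card]; omega
    have hfar2 : 2 ≤ ((A ∩ Bb)ᶜ \ gBoundary G (A ∩ Bb)).ncard := by
      rw [far_eq]
      exact le_trans (by omega) (Set.ncard_le_ncard hfar3)
    have := hatom _ ⟨hfrag, h2, hfar2⟩
    omega
  -- the X inequalities: u has a neighbour in B and in Bb
  have X1 : 1 ≤ (A ∩ B).ncard + (T ∩ B).ncard := by
    have huS : u ∈ gBoundary G B := by rw [hbdB]; exact hu.2
    obtain ⟨-, b, hbB, hadj⟩ := huS
    have hb : b ∈ (A ∩ B) ∪ (T ∩ B) := by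
      rcases closedA hadj.symm hu.1 with h | h
      · exact Or.inl ⟨h, hbB⟩
      · exact Or.inr ⟨h, hbB⟩
    have h1 : 0 < ((A ∩ B) ∪ (T ∩ B)).ncard := (Set.ncard_pos (Set.toFinite _)).mpr ⟨b, hb⟩
    have h2 := Set.ncard_union_le (A ∩ B) (T ∩ B)
    omega
  have X3 : 1 ≤ (A ∩ Bb).ncard + (T ∩ Bb).ncard := by
    have huS : u ∈ gBoundary G Bb := by rw [hbdBb]; exact hu.2
    obtain ⟨-, b, hbB, hadj⟩ := huS
    have hb : b ∈ (A ∩ Bb) ∪ (T ∩ Bb) := by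
      rcases closedA hadj.symm hu.1 with h | h
      · exact Or.inl ⟨h, hbB⟩
      · exact Or.inr ⟨h, hbB⟩
    have h1 : 0 < ((A ∩ Bb) ∪ (T ∩ Bb)).ncard := (Set.ncard_pos (Set.toFinite _)).mpr ⟨b, hb⟩
    have h2 := Set.ncard_union_le (A ∩ Bb) (T ∩ Bb)
    omega
  -- the arithmetic core
  have k1 : (A ∩ B).ncard = 1 ∧ (A ∩ Bb).ncard = 1 ∧ (A ∩ S).ncard = 2 ∧
      (T ∩ B).ncard = 2 ∧ (T ∩ S).ncard = 1 ∧ (T ∩ Bb).ncard = 2 := by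
    omega
  obtain ⟨w, hw⟩ := Set.ncard_eq_one.mp k1.1
  obtain ⟨w', hw'⟩ := Set.ncard_eq_one.mp k1.2.1
  have hNw : G.neighborSet w = (A ∩ S) ∪ (T ∩ B) ∪ (T ∩ S) := by
    have hbdw : G.neighborSet w ⊆ (A ∩ S) ∪ (T ∩ B) ∪ (T ∩ S) := by
      rw [← gB_singleton, ← hw]; exact hbd1
    refine Set.eq_of_subset_of_ncard_le hbdw ?_ (Set.toFinite _)
    have := deg_five h5 w
    rw [L1card]
    omega
  have hNw' : G.neighborSet w' = (A ∩ S) ∪ (T ∩ Bb) ∪ (T ∩ S) := by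
    have hbdw : G.neighborSet w' ⊆ (A ∩ S) ∪ (T ∩ Bb) ∪ (T ∩ S) := by
      rw [← gB_singleton, ← hw']; exact hbd3
    refine Set.eq_of_subset_of_ncard_le hbdw ?_ (Set.toFinite _)
    have := deg_five h5 w'
    rw [L3card]
    omega
  exact ⟨k1.2.2.1, w, w', hw, hw', hNw, hNw'⟩

end tight

/-- A nontrivial atom of a 5-connected, contraction critical
quasi 5-connected graph has at most 3 vertices. -/
theorem stmt8 {V : Type*} [Fintype V] [DecidableEq V] (G : SimpleGraph V)
    (h5 : IsKConnected 5 G) (hcc : ContractionCriticalQuasiFive G)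
    (A : Set V) (hA : IsNontrivialFragment G A)
    (hatom : ∀ B : Set V, IsNontrivialFragment G B → A.ncard ≤ B.ncard) :
    A.ncard ≤ 3 := by
  classical
  by_contra hle
  push_neg at hle
  have hm : 4 ≤ A.ncard := hle
  obtain ⟨⟨hAne, hAfarne, hAmin⟩, hA2, hAfar2⟩ := id hA
  -- a separator of size exactly 5 exists, hence |N(A)| = 5
  obtain ⟨a0, ha0⟩ := hAne
  have hd0 : 5 ≤ (G.neighborSet a0).ncard := deg_five h5 a0
  obtain ⟨b0, hb0⟩ : (G.neighborSet a0).Nonempty :=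
    Set.nonempty_of_ncard_ne_zero (by omega)
  obtain ⟨S0, B0, Bb0, hS05, -, -, hbdB0, hbdBb0, hdisj0, hun0, hfB0, hfBb0⟩ :=
    frag_of_edge h5 hcc (hb0 : G.Adj a0 b0)
  have hnoB0 : ∀ a ∈ B0, ∀ b ∈ Bb0, ¬ G.Adj a b := by
    intro a ha b hb hadj
    by_cases hbB : b ∈ B0
    · exact Set.disjoint_left.mp hdisj0 hbB hb
    · have hbS : b ∈ S0 := by
        rw [← hbdB0]; exact ⟨hbB, a, ha, hadj.symm⟩
      have : Disjoint S0 Bb0 := by rw [← hbdBb0]; exact (gB_disj G Bb0).symm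
      exact Set.disjoint_left.mp this hbS hb
  have hsep0 : Separates G S0 :=
    sep_of_parts (Set.nonempty_of_ncard_ne_zero (by have := hfB0.2.1; omega))
      (Set.nonempty_of_ncard_ne_zero (by have := hfBb0.2.1; omega)) hdisj0 hun0 hnoB0
  have hT5 : (gBoundary G A).ncard = 5 := by
    have hge : 5 ≤ (gBoundary G A).ncard := by
      apply five_le_bd h5 ⟨a0, ha0⟩
      rw [← far_eq]; exact hAfarne
    have hle5 := hAmin S0 hsep0
    omega
  -- the far side of A is a nontrivial fragment, so it has at least |A| vertices
  have hAbdisjA : Disjoint A ((A ∪ gBoundary G A)ᶜ) :=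
    disjoint_compl_right.mono_left Set.subset_union_left
  have hAbdisjT : Disjoint (gBoundary G A) ((A ∪ gBoundary G A)ᶜ) :=
    disjoint_compl_right.mono_left Set.subset_union_right
  have hbdAbar_sub : gBoundary G ((A ∪ gBoundary G A)ᶜ) ⊆ gBoundary G A := by
    rintro z ⟨hz, q, hq, hadj⟩
    have hz' : z ∈ A ∪ gBoundary G A := Set.notMem_compl_iff.mp hz
    rcases hz' with h | h
    · exfalso
      have hqT : q ∈ gBoundary G A := ⟨fun hqA => hq (Or.inl hqA), z, h, hadj.symm⟩
      exact hq (Or.inr hqT)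
    · exact h
  have hAsubfar : A ⊆ (((A ∪ gBoundary G A)ᶜ) ∪ gBoundary G ((A ∪ gBoundary G A)ᶜ))ᶜ := by
    intro z hz
    rintro (h | h)
    · exact Set.disjoint_left.mp hAbdisjA hz h
    · exact Set.disjoint_left.mp (gB_disj G A) hz (hbdAbar_sub h)
  have hAbfrag : IsNontrivialFragment G ((A ∪ gBoundary G A)ᶜ) := by
    have hAbne : ((A ∪ gBoundary G A)ᶜ).Nonempty := by
      rw [← far_eq]; exact hAfarne
    refine ⟨fragment_of h5 hAbne ⟨a0, hAsubfar ha0⟩ ?_, ?_, ?_⟩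
    · exact le_trans (Set.ncard_le_ncard hbdAbar_sub) (le_of_eq hT5)
    · rw [← far_eq]; exact hAfar2
    · rw [far_eq]
      exact le_trans hA2 (Set.ncard_le_ncard hAsubfar)
  have hAbar : A.ncard ≤ ((A ∪ gBoundary G A)ᶜ).ncard := hatom _ hAbfrag
  -- A contains an edge
  have hedge : ∃ x ∈ A, ∃ y ∈ A, G.Adj x y := by
    by_contra hno
    push_neg at hno
    set X : Set V := A \ {a0} with hXdef
    have hbdX : gBoundary G X ⊆ gBoundary G A := by
      rintro z ⟨hz, q, hq, hadj⟩
      refine ⟨fun hzA => hno z hzA q hq.1 hadj, q, hq.1, hadj⟩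
    have hXcard : X.ncard = A.ncard - 1 := Set.ncard_diff_singleton_of_mem ha0
    have hXne : X.Nonempty := Set.nonempty_of_ncard_ne_zero (by omega)
    have hfarXsub : insert a0 ((A ∪ gBoundary G A)ᶜ) ⊆ (X ∪ gBoundary G X)ᶜ := by
      rintro z hz (h | h)
      · rcases hz with rfl | hz
        · exact h.2 rfl
        · exact Set.disjoint_left.mp hAbdisjA h.1 hz
      · have hzT : z ∈ gBoundary G A := hbdX h
        rcases hz with rfl | hz
        · exact Set.disjoint_left.mp (gB_disj G A) ha0 hzT
        · exact Set.disjoint_left.mp hAbdisjT hzT hz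
    have ha0nAb : a0 ∉ (A ∪ gBoundary G A)ᶜ := fun h => Set.disjoint_left.mp hAbdisjA ha0 h
    have hXfar2 : 2 ≤ (Xᶜ \ gBoundary G X).ncard := by
      rw [far_eq]
      refine le_trans ?_ (Set.ncard_le_ncard hfarXsub)
      rw [Set.ncard_insert_of_notMem ha0nAb]
      omega
    have hXfrag : IsFragment G X := by
      refine fragment_of h5 hXne ⟨a0, hfarXsub (Set.mem_insert _ _)⟩ ?_
      exact le_trans (Set.ncard_le_ncard hbdX) (le_of_eq hT5)
    have := hatom X ⟨hXfrag, by omega, hXfar2⟩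
    omega
  obtain ⟨x, hxA, y, hyA, hxy⟩ := hedge
  -- first application
  obtain ⟨S, B, Bb, hS5, hxS, hyS, hbdB, hbdBb, hdisj, hun, hfB, hfBb⟩ :=
    frag_of_edge h5 hcc hxy
  obtain ⟨hAS2, w, w', hwB, hwBb, hNw, hNw'⟩ :=
    tight h5 hA hatom hm hT5 hAbar hS5 hbdB hbdBb hdisj hun (hatom _ hfB) (hatom _ hfBb)
      ⟨hxA, hxS⟩ ⟨hyA, hyS⟩ hxy.ne
  have hwAB : w ∈ A ∩ B := by rw [hwB]; exact rfl
  have hw'ABb : w' ∈ A ∩ Bb := by rw [hwBb]; exact rfl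
  have hdSB : Disjoint S B := by rw [← hbdB]; exact (gB_disj G B).symm
  have hdSBb : Disjoint S Bb := by rw [← hbdBb]; exact (gB_disj G Bb).symm
  have hadjwx : G.Adj w x := by
    have : x ∈ G.neighborSet w := by rw [hNw]; exact Or.inl (Or.inl ⟨hxA, hxS⟩)
    exact this
  have hadjw'y : G.Adj w' y := by
    have : y ∈ G.neighborSet w' := by rw [hNw']; exact Or.inl (Or.inl ⟨hyA, hyS⟩)
    exact this
  -- second application, to the edge x w
  obtain ⟨S2, C, Cb, hS25, hxS2, hwS2, hbdC, hbdCb, hdisj2, hun2, hfC, hfCb⟩ :=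
    frag_of_edge h5 hcc hadjwx.symm
  have hxw_ne : x ≠ w := fun h => Set.disjoint_left.mp hdSB (h ▸ hxS) hwAB.2
  obtain ⟨hAS22, p, q, hpC, hqCb, hNp, hNq⟩ :=
    tight h5 hA hatom hm hT5 hAbar hS25 hbdC hbdCb hdisj2 hun2 (hatom _ hfC) (hatom _ hfCb)
      ⟨hxA, hxS2⟩ ⟨hwAB.1, hwS2⟩ hxw_ne
  have hAS2eq : ({x, w} : Set V) = A ∩ S2 := by
    refine Set.eq_of_subset_of_ncard_le ?_ ?_ (Set.toFinite _)
    · rintro z (rfl | rfl)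
      · exact ⟨hxA, hxS2⟩
      · exact ⟨hwAB.1, hwS2⟩
    · rw [hAS22, Set.ncard_pair hxw_ne]
  have hpAC : p ∈ A ∩ C := by rw [hpC]; exact rfl
  have hqACb : q ∈ A ∩ Cb := by rw [hqCb]; exact rfl
  have hdS2Cb : Disjoint S2 Cb := by rw [← hbdCb]; exact (gB_disj G Cb).symm
  -- y and w' avoid S2
  have hyS2 : y ∉ S2 := by
    intro h
    have hy2 : y ∈ ({x, w} : Set V) := by rw [hAS2eq]; exact ⟨hyA, h⟩
    rcases hy2 with h' | h'
    · rw [h'] at hxy; exact G.loopless.irrefl x hxy.symm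
    · rw [h'] at hyS; exact Set.disjoint_left.mp hdSB hyS hwAB.2
  have hw'S2 : w' ∉ S2 := by
    intro h
    have hw2 : w' ∈ ({x, w} : Set V) := by rw [hAS2eq]; exact ⟨hw'ABb.1, h⟩
    rcases hw2 with h' | h'
    · rw [h'] at hw'ABb; exact Set.disjoint_left.mp hdSBb hxS hw'ABb.2
    · rw [h'] at hw'ABb; exact Set.disjoint_left.mp hdisj hwAB.2 hw'ABb.2
  have hymem : y = p ∨ y = q := by
    have : y ∈ C ∪ Cb := by rw [hun2]; exact hyS2
    rcases this with h | h
    · left; have : y ∈ A ∩ C := ⟨hyA, h⟩; rw [hpC] at this; exact this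
    · right; have : y ∈ A ∩ Cb := ⟨hyA, h⟩; rw [hqCb] at this; exact this
  have hw'mem : w' = p ∨ w' = q := by
    have : w' ∈ C ∪ Cb := by rw [hun2]; exact hw'S2
    rcases this with h | h
    · left; have : w' ∈ A ∩ C := ⟨hw'ABb.1, h⟩; rw [hpC] at this; exact this
    · right; have : w' ∈ A ∩ Cb := ⟨hw'ABb.1, h⟩; rw [hqCb] at this; exact this
  have hyw' : y ≠ w' := fun h => Set.disjoint_left.mp hdSBb (h ▸ hyS) hw'ABb.2
  have hpq_nonadj : ¬ G.Adj p q := by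
    intro hadj
    have hq' : q ∈ G.neighborSet p := hadj
    rw [hNp] at hq'
    rcases hq' with (h | h) | h
    · exact Set.disjoint_left.mp hdS2Cb h.2 hqACb.2
    · exact Set.disjoint_left.mp (gB_disj G A) hqACb.1 h.1
    · exact Set.disjoint_left.mp (gB_disj G A) hqACb.1 h.1
  have hadjyw' : G.Adj y w' := hadjw'y.symm
  rcases hymem with rfl | rfl
  · rcases hw'mem with h' | h'
    · exact hyw' h'.symm
    · rw [h'] at hadjyw'; exact hpq_nonadj hadjyw'
  · rcases hw'mem with h' | h'
    · rw [h'] at hadjyw'; exact hpq_nonadj hadjyw'.symm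
    · exact hyw' h'.symm
end
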